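/- arXiv:2006.07951 — 8 statements merged into one kernel-verified Lean document; each statement's English description precedes it below -/
import Mathlib

section
/- Let F be a field, p a prime with char F ≠ p, and M, N nonzero elements of F. Fix roots μ, ν in an algebraic closure of F with μ^p = M and ν^p = N. If μ ∈ F(ν), then M = a^p·N^k for some a ∈ F and some integer k. -/
open Polynomial IntermediateField

lemma norm_trick {F K : Type*} [Field F] [Field K] [Algebra F K] [FiniteDimensional F K]
    (p : ℕ) (hp : p.Prime) (hd : ¬ p ∣ Module.finrank F K) {Q : F} (hQ : Q ≠ 0)
    {x : K} (hx : x ^ p = algebraMap F K Q) : ∃ a : F, a ^ p = Q := by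
  set d := Module.finrank F K with hdd
  set n := Algebra.norm F x with hnn
  have hn : n ^ p = Q ^ d := by
    rw [hnn, ← map_pow, hx, Algebra.norm_algebraMap]
  have hcop : Nat.Coprime p d := (hp.coprime_iff_not_dvd).mpr hd
  have hbez : (p : ℤ) * Nat.gcdA p d + (d : ℤ) * Nat.gcdB p d = 1 := by
    have := Nat.gcd_eq_gcd_ab p d
    rw [hcop] at this
    push_cast at this
    linarith
  have hQn : n ≠ 0 := by
    intro h
    rw [h, zero_pow hp.ne_zero] at hn
    exact pow_ne_zero d hQ hn.symm
  set u := Nat.gcdA p d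
  set v := Nat.gcdB p d
  have hnZ : n ^ (p:ℤ) = Q ^ (d:ℤ) := by exact_mod_cast hn
  refine ⟨Q ^ u * n ^ v, ?_⟩
  have h1 : (Q ^ u * n ^ v) ^ (p : ℤ) = Q := by
    rw [mul_zpow, ← zpow_mul, ← zpow_mul, mul_comm v, zpow_mul n, hnZ, ← zpow_mul,
      mul_comm u, ← zpow_add₀ hQ, hbez, zpow_one]
  simpa using h1

lemma minpoly_deg_lt {F K : Type*} [Field F] [Field K] [Algebra F K]
    (p : ℕ) (hp : p.Prime) (b : F) {x : K} (hx : x ^ p = algebraMap F K (b ^ p)) :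
    (minpoly F x).natDegree < p := by
  have hint : IsIntegral F x := by
    refine ⟨X ^ p - C (b ^ p), monic_X_pow_sub_C _ hp.ne_zero, ?_⟩
    simp [hx]
  have hdvd : minpoly F x ∣ X ^ p - C (b ^ p) := minpoly.dvd F x (by simp [hx])
  obtain ⟨w, hw⟩ := sub_dvd_pow_sub_pow (X : F[X]) (C b) p
  rw [← C_pow] at hw
  have hw0 : w ≠ 0 := by
    intro h
    exact X_pow_sub_C_ne_zero hp.pos (b ^ p) (by rw [hw, h, mul_zero])
  have hdegw : w.natDegree = p - 1 := by
    have h1 : ((X:F[X]) - C b) ≠ 0 := X_sub_C_ne_zero b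
    have := natDegree_mul h1 hw0
    rw [← hw, natDegree_X_pow_sub_C, natDegree_X_sub_C] at this
    omega
  have hprime := minpoly.prime hint
  have hp1 := hp.one_lt
  rw [hw] at hdvd
  rcases hprime.2.2 _ _ hdvd with h | h
  · have := Polynomial.natDegree_le_of_dvd h (X_sub_C_ne_zero b)
    rw [natDegree_X_sub_C] at this
    omega
  · have := Polynomial.natDegree_le_of_dvd h hw0
    omega

set_option synthInstance.maxHeartbeats 1000000 in
set_option maxHeartbeats 2000000 in
theorem lemma1_claim
    {F : Type*} [Field F] (p : ℕ) (hp : p.Prime) (hchar : ringChar F ≠ p)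
    (M N : F) (hM : M ≠ 0) (hN : N ≠ 0)
    (μ ν : AlgebraicClosure F)
    (hμ : μ ^ p = algebraMap F (AlgebraicClosure F) M)
    (hν : ν ^ p = algebraMap F (AlgebraicClosure F) N)
    (hmem : μ ∈ IntermediateField.adjoin F ({ν} : Set (AlgebraicClosure F))) :
    ∃ (a : F) (k : ℤ), M = a ^ p * N ^ k := by
  have halg : Function.Injective (algebraMap F (AlgebraicClosure F)) := (algebraMap F (AlgebraicClosure F)).injective
  have hμ0 : μ ≠ 0 := by
    intro h
    rw [h, zero_pow hp.ne_zero] at hμ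
    exact hM (halg (by simpa using hμ.symm))
  have hν0 : ν ≠ 0 := by
    intro h
    rw [h, zero_pow hp.ne_zero] at hν
    exact hN (halg (by simpa using hν.symm))
  by_cases hA : ∃ b : F, b ^ p = N
  · -- Case A : N is a p-th power in F
    obtain ⟨b, hb⟩ := hA
    have hνb : ν ^ p = algebraMap F (AlgebraicClosure F) (b ^ p) := by rw [hb, hν]
    have hint : IsIntegral F ν := by
      refine ⟨X ^ p - C (b ^ p), monic_X_pow_sub_C _ hp.ne_zero, ?_⟩
      simp [hνb]
    haveI : FiniteDimensional F F⟮ν⟯ := adjoin.finiteDimensional hint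
    have hdlt : (minpoly F ν).natDegree < p := minpoly_deg_lt p hp b hνb
    have hd0 : 0 < (minpoly F ν).natDegree := minpoly.natDegree_pos hint
    have hrank : Module.finrank F F⟮ν⟯ = (minpoly F ν).natDegree := adjoin.finrank hint
    have hndvd : ¬ p ∣ Module.finrank F F⟮ν⟯ := by
      rw [hrank]; exact Nat.not_dvd_of_pos_of_lt hd0 hdlt
    set x : F⟮ν⟯ := ⟨μ, hmem⟩ with hxdef
    have hx : x ^ p = algebraMap F F⟮ν⟯ M := by
      apply Subtype.ext
      push_cast
      rw [hμ]
    obtain ⟨a, ha⟩ := norm_trick p hp hndvd hM hx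
    exact ⟨a, 0, by rw [zpow_zero, mul_one, ha]⟩
  · push_neg at hA
    -- a primitive p-th root of unity
    have hpF : (p : F) ≠ 0 := by
      intro h
      have h2 : ringChar F ∣ p := (CharP.cast_eq_zero_iff F (ringChar F) p).mp h
      rcases CharP.char_is_prime_or_zero F (ringChar F) with hq | hq
      · exact hchar ((Nat.prime_dvd_prime_iff_eq hq hp).mp h2)
      · rw [hq] at h2; exact hp.ne_zero (zero_dvd_iff.mp h2)
    have hpΩ : ((p : ℕ) : AlgebraicClosure F) ≠ 0 := by
      intro h
      exact hpF (halg (by simpa using h))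
    haveI : NeZero ((p : ℕ) : AlgebraicClosure F) := ⟨hpΩ⟩
    haveI : NeZero p := ⟨hp.ne_zero⟩
    obtain ⟨ζ, hζroot⟩ := IsAlgClosed.exists_root (cyclotomic p (AlgebraicClosure F)) (by
      rw [degree_cyclotomic]
      exact_mod_cast (Nat.totient_pos.mpr hp.pos).ne')
    have hζ : IsPrimitiveRoot ζ p := isRoot_cyclotomic_iff.mp hζroot
    have hζp : ζ ^ p = 1 := hζ.pow_eq_one
    -- E = F(ζ) has degree < p over F
    have hζpow : ζ ^ p = algebraMap F (AlgebraicClosure F) ((1:F) ^ p) := by simp [hζp]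
    have hζint : IsIntegral F ζ :=
      ⟨X ^ p - C 1, monic_X_pow_sub_C _ hp.ne_zero, by simp [hζp]⟩
    haveI : FiniteDimensional F F⟮ζ⟯ := adjoin.finiteDimensional hζint
    have hEdeg : (minpoly F ζ).natDegree < p := minpoly_deg_lt p hp 1 hζpow
    have hErank : Module.finrank F F⟮ζ⟯ = (minpoly F ζ).natDegree := adjoin.finrank hζint
    have hEndvd : ¬ p ∣ Module.finrank F F⟮ζ⟯ := by
      rw [hErank]
      exact Nat.not_dvd_of_pos_of_lt (minpoly.natDegree_pos hζint) hEdeg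
    -- x^p - N is irreducible over F, so [F(ν):F] = p
    have hirr : Irreducible (X ^ p - C N : F[X]) := X_pow_sub_C_irreducible_of_prime hp hA
    have hminν : minpoly F ν = X ^ p - C N :=
      (minpoly.eq_of_irreducible_of_monic hirr (by simp [hν])
        (monic_X_pow_sub_C _ hp.ne_zero)).symm
    have hνint : IsIntegral F ν :=
      ⟨X ^ p - C N, monic_X_pow_sub_C _ hp.ne_zero, by simp [hν]⟩
    haveI : FiniteDimensional F F⟮ν⟯ := adjoin.finiteDimensional hνint
    have hνrank : Module.finrank F F⟮ν⟯ = p := by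
      rw [adjoin.finrank hνint, hminν, natDegree_X_pow_sub_C]
    -- N is not a p-th power in E either
    set N' : F⟮ζ⟯ := algebraMap F F⟮ζ⟯ N with hN'def
    have hcoeN' : algebraMap F⟮ζ⟯ (AlgebraicClosure F) N' = algebraMap F (AlgebraicClosure F) N := by
      rw [hN'def, ← IsScalarTower.algebraMap_apply]
    have hAE : ∀ c : F⟮ζ⟯, c ^ p ≠ N' := by
      intro c hc
      have hcΩ : (c : AlgebraicClosure F) ^ p = ν ^ p := by
        have h1 := congrArg (algebraMap F⟮ζ⟯ (AlgebraicClosure F)) hc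
        rw [map_pow, hcoeN'] at h1
        rw [hν]
        exact h1
      have hc0 : (c : AlgebraicClosure F) ≠ 0 := by
        intro h0
        rw [h0, zero_pow hp.ne_zero] at hcΩ
        rw [hν] at hcΩ
        exact hN (halg (by simpa using hcΩ.symm))
      have ht : (ν / (c : AlgebraicClosure F)) ^ p = 1 := by
        rw [div_pow, hcΩ, div_self (pow_ne_zero p hν0)]
      obtain ⟨i, hip, hi⟩ := hζ.eq_pow_of_pow_eq_one ht
      have hνeq : ν = ζ ^ i * (c : AlgebraicClosure F) := by
        field_simp at hi
        exact hi.symm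
      have hνmem : ν ∈ F⟮ζ⟯ := by
        rw [hνeq]
        exact mul_mem (pow_mem (mem_adjoin_simple_self F ζ) i) c.2
      have hsub : F⟮ν⟯ ≤ F⟮ζ⟯ := adjoin_simple_le_iff.mpr hνmem
      haveI : Module.Finite F (Subalgebra.toSubmodule F⟮ζ⟯.toSubalgebra) :=
        inferInstanceAs (FiniteDimensional F F⟮ζ⟯)
      have hle : Module.finrank F F⟮ν⟯ ≤ Module.finrank F F⟮ζ⟯ :=
        Submodule.finrank_mono (show F⟮ν⟯.toSubmodule ≤ F⟮ζ⟯.toSubmodule by exact_mod_cast hsub)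
      rw [hνrank] at hle
      omega
    -- minpoly of ν over E := F(ζ)
    have hirrE : Irreducible (X ^ p - C N' : (F⟮ζ⟯)[X]) := X_pow_sub_C_irreducible_of_prime hp hAE
    have haevalE : (Polynomial.aeval ν) (X ^ p - C N' : (F⟮ζ⟯)[X]) = 0 := by
      simp [hν, hcoeN']
    have hminE : minpoly F⟮ζ⟯ ν = X ^ p - C N' :=
      (minpoly.eq_of_irreducible_of_monic hirrE haevalE (monic_X_pow_sub_C _ hp.ne_zero)).symm
    have hνintE : IsIntegral F⟮ζ⟯ ν := ⟨X ^ p - C N', monic_X_pow_sub_C _ hp.ne_zero, haevalE⟩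
    set B := adjoin.powerBasis hνintE with hBdef
    have hBdim : B.dim = p := by
      rw [hBdef, adjoin.powerBasis_dim, hminE, natDegree_X_pow_sub_C]
    -- μ lives in E(ν)
    have hmemE : μ ∈ IntermediateField.adjoin ↥F⟮ζ⟯ ({ν} : Set (AlgebraicClosure F)) := by
      have hle : IntermediateField.adjoin F ({ν} : Set (AlgebraicClosure F)) ≤
          (IntermediateField.adjoin ↥F⟮ζ⟯ ({ν} : Set (AlgebraicClosure F))).restrictScalars F := by
        apply adjoin_simple_le_iff.mpr
        exact mem_adjoin_simple_self ↥F⟮ζ⟯ ν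
      exact hle hmem
    set x : ↥(IntermediateField.adjoin ↥F⟮ζ⟯ ({ν} : Set (AlgebraicClosure F))) := ⟨μ, hmemE⟩
      with hxdef
    set ζE : ↥F⟮ζ⟯ := ⟨ζ, mem_adjoin_simple_self F ζ⟩ with hζEdef
    have hζEcoe : algebraMap ↥F⟮ζ⟯ (AlgebraicClosure F) ζE = ζ := rfl
    have hζE1 : ζE ^ p = 1 := by
      apply Subtype.ext
      simp only [SubmonoidClass.coe_pow, OneMemClass.coe_one, hζEdef]
      exact hζp
    set ζE' : ↥(IntermediateField.adjoin ↥F⟮ζ⟯ ({ν} : Set (AlgebraicClosure F))) :=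
      algebraMap ↥F⟮ζ⟯ _ ζE with hζE'def
    -- the generator and its p-th power
    have hgenν : algebraMap _ (AlgebraicClosure F) (AdjoinSimple.gen ↥F⟮ζ⟯ ν) = ν := rfl
    have hgenp : (AdjoinSimple.gen ↥F⟮ζ⟯ ν) ^ p = algebraMap ↥F⟮ζ⟯ _ N' := by
      have h1 := minpoly.aeval ↥F⟮ζ⟯ (AdjoinSimple.gen ↥F⟮ζ⟯ ν)
      rw [minpoly_gen, hminE] at h1
      simp only [map_sub, map_pow, aeval_X, aeval_C] at h1
      rw [sub_eq_zero] at h1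
      exact h1
    have hy : (Polynomial.aeval (ζE' * AdjoinSimple.gen ↥F⟮ζ⟯ ν))
        (minpoly ↥F⟮ζ⟯ (AdjoinSimple.gen ↥F⟮ζ⟯ ν)) = 0 := by
      rw [minpoly_gen, hminE]
      simp only [map_sub, map_pow, aeval_X, aeval_C]
      rw [mul_pow, hgenp, hζE'def, ← map_pow, hζE1]
      simp
    have hgengen : B.gen = AdjoinSimple.gen ↥F⟮ζ⟯ ν := adjoin.powerBasis_gen hνintE
    set τ := B.lift (ζE' * AdjoinSimple.gen ↥F⟮ζ⟯ ν) (by rw [hgengen]; exact hy) with hτdef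
    have hτgen : τ B.gen = ζE' * B.gen := by
      rw [hτdef, PowerBasis.lift_gen, hgengen]
    set ι := (IntermediateField.adjoin ↥F⟮ζ⟯ ({ν} : Set (AlgebraicClosure F))).val with hιdef
    have hιx : ι x = μ := rfl
    have hιgen : ι B.gen = ν := by rw [hgengen]; rfl
    have hxp : x ^ p = algebraMap ↥F⟮ζ⟯ _ (algebraMap F ↥F⟮ζ⟯ M) := by
      apply Subtype.ext
      rw [SubmonoidClass.coe_pow]
      show μ ^ p = _
      rw [hμ]
      rfl
    have hτx : ι (τ x) ^ p = μ ^ p := by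
      have e1 : ι (τ x) ^ p = ι (τ (x ^ p)) := by rw [map_pow, map_pow]
      rw [e1, hxp, AlgHom.commutes, AlgHom.commutes, ← IsScalarTower.algebraMap_apply, hμ]
    obtain ⟨j, hjp, hj⟩ := hζ.eq_pow_of_pow_eq_one
      (show (ι (τ x) / μ) ^ p = 1 by rw [div_pow, hτx, div_self (pow_ne_zero p hμ0)])
    have hτeq : ι (τ x) = ζ ^ j * μ := by
      rw [eq_div_iff hμ0] at hj
      exact hj.symm
    have hιinj : Function.Injective ι := Subtype.val_injective
    have hτ'x : τ x = ζE' ^ j * x := by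
      apply hιinj
      have hiζ : ι ζE' = ζ := by rw [hζE'def, AlgHom.commutes, hζEcoe]
      rw [hτeq, map_mul, map_pow, hιx, hiζ]
    -- expand x in the power basis
    set c := B.basis.repr x with hcdef
    have hsum : ∑ i : Fin B.dim, c i • B.gen ^ (i : ℕ) = x := by
      conv_rhs => rw [← B.basis.sum_repr x]
      refine Finset.sum_congr rfl fun i _ => ?_
      rw [PowerBasis.basis_eq_pow]
    have hτsum : τ x = ∑ i : Fin B.dim, (c i * ζE ^ (i : ℕ)) • B.gen ^ (i : ℕ) := by
      conv_lhs => rw [← hsum]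
      rw [map_sum]
      refine Finset.sum_congr rfl fun i _ => ?_
      rw [map_smul, map_pow, hτgen, mul_pow]
      simp only [Algebra.smul_def, map_mul, map_pow]
      ring
    have hright : ζE' ^ j * x = ∑ i : Fin B.dim, (ζE ^ j * c i) • B.gen ^ (i : ℕ) := by
      conv_lhs => rw [← hsum]
      rw [Finset.mul_sum]
      refine Finset.sum_congr rfl fun i _ => ?_
      simp only [Algebra.smul_def, map_mul, map_pow]
      ring
    have hzero : ∑ i : Fin B.dim,
        (c i * ζE ^ (i : ℕ) - ζE ^ j * c i) • B.basis i = 0 := by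
      simp only [sub_smul, Finset.sum_sub_distrib, PowerBasis.basis_eq_pow]
      rw [← hτsum, ← hright, hτ'x, sub_self]
    have hcoef : ∀ i : Fin B.dim, (i : ℕ) ≠ j → c i = 0 := by
      intro i hij
      have h0 := linearIndependent_iff'.mp B.basis.linearIndependent Finset.univ _ hzero i
        (Finset.mem_univ i)
      have hne : ζE ^ (i : ℕ) ≠ ζE ^ j := by
        intro he
        apply hij
        have he2 : ζ ^ (i : ℕ) = ζ ^ j := by
          have := congrArg (algebraMap ↥F⟮ζ⟯ (AlgebraicClosure F)) he
          rwa [map_pow, map_pow, hζEcoe] at this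
        exact hζ.pow_inj (hBdim ▸ i.isLt) hjp he2
      have h1 : c i * (ζE ^ (i : ℕ) - ζE ^ j) = 0 := by linear_combination h0
      rcases mul_eq_zero.mp h1 with h2 | h2
      · exact h2
      · exact absurd (sub_eq_zero.mp h2) hne
    have hjB : j < B.dim := hBdim ▸ hjp
    set jF : Fin B.dim := ⟨j, hjB⟩ with hjFdef
    have hxcollapse : x = c jF • B.gen ^ ((jF : ℕ)) := by
      rw [← hsum]
      exact Finset.sum_eq_single jF
        (fun i _ hij => by rw [hcoef i (fun h => hij (Fin.ext h)), zero_smul])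
        (fun h => absurd (Finset.mem_univ jF) h)
    have hμeq : μ = algebraMap ↥F⟮ζ⟯ (AlgebraicClosure F) (c jF) * ν ^ j := by
      have h3 := congrArg ι hxcollapse
      rw [hιx] at h3
      rw [h3, map_smul, map_pow, hιgen, Algebra.smul_def]
    have h2 : algebraMap F (AlgebraicClosure F) (N ^ j) = (ν ^ j) ^ p := by
      rw [map_pow, ← hν, ← pow_mul, ← pow_mul, mul_comm]
    have key : algebraMap F (AlgebraicClosure F) M =
        (algebraMap ↥F⟮ζ⟯ (AlgebraicClosure F) (c jF)) ^ p *
          algebraMap F (AlgebraicClosure F) (N ^ j) := by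
      rw [← hμ, hμeq, mul_pow, h2]
    have hNjΩ : algebraMap F (AlgebraicClosure F) (N ^ j) ≠ 0 :=
      fun h => (pow_ne_zero j hN) (halg (by simpa using h))
    have hcp : (c jF) ^ p = algebraMap F ↥F⟮ζ⟯ (M / N ^ j) := by
      apply (algebraMap ↥F⟮ζ⟯ (AlgebraicClosure F)).injective
      rw [map_pow, ← IsScalarTower.algebraMap_apply, map_div₀, eq_div_iff hNjΩ]
      exact key.symm
    obtain ⟨a, ha⟩ := norm_trick p hp hEndvd (div_ne_zero hM (pow_ne_zero j hN)) hcp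
    exact ⟨a, (j : ℤ), by rw [zpow_natCast, ha, div_mul_cancel₀ _ (pow_ne_zero j hN)]⟩
end

section
/- Let F be a field, p a prime with char F ≠ p, ζ a primitive p-th root of unity in an algebraic closure of F, and K = F(ζ). Then an element of F that is a p-th power of an element of K is already a p-th power of an element of F; that is, K^p ∩ F = F^p. -/
open Polynomial IntermediateField

theorem Kp_inter_F_eq_Fp
    {F : Type*} [Field F] (p : ℕ) (hp : p.Prime) (hchar : ringChar F ≠ p)
    (ζ : AlgebraicClosure F) (hζ : IsPrimitiveRoot ζ p)
    (x : F) :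
    (∃ y ∈ IntermediateField.adjoin F ({ζ} : Set (AlgebraicClosure F)),
        y ^ p = algebraMap F (AlgebraicClosure F) x) ↔
      ∃ a : F, x = a ^ p := by
  constructor
  · rintro ⟨y, hyK, hy⟩
    by_contra hx
    push_neg at hx
    -- X^p - C x is irreducible over F
    have hirr : Irreducible (X ^ p - C x) :=
      X_pow_sub_C_irreducible_of_prime hp (fun b hb => hx b hb.symm)
    have hroot : Polynomial.aeval y (X ^ p - C x) = 0 := by
      simp [hy]
    have hmonic : (X ^ p - C x).Monic := monic_X_pow_sub_C x hp.ne_zero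
    have hmin : minpoly F y = X ^ p - C x :=
      (minpoly.eq_of_irreducible_of_monic hirr hroot hmonic).symm
    have hyint : IsIntegral F y := ⟨X ^ p - C x, hmonic, hroot⟩
    -- ζ is integral: it is a root of the geometric sum, of degree p - 1
    have hgeom : Polynomial.aeval ζ (∑ i ∈ Finset.range p, (X : F[X]) ^ i) = 0 := by
      have := hζ.geom_sum_eq_zero hp.one_lt
      simpa using this
    have hgmonic : (∑ i ∈ Finset.range p, (X : F[X]) ^ i).Monic :=
      Polynomial.monic_geom_sum_X hp.ne_zero
    have hζint : IsIntegral F ζ := ⟨∑ i ∈ Finset.range p, X ^ i, hgmonic, hgeom⟩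
    have hfd : FiniteDimensional F (IntermediateField.adjoin F ({ζ} : Set (AlgebraicClosure F))) :=
      IntermediateField.adjoin.finiteDimensional hζint
    -- the geometric sum has degree p - 1
    have hgdeg : (∑ i ∈ Finset.range p, (X : F[X]) ^ i).natDegree = p - 1 := by
      have hmul : (∑ i ∈ Finset.range p, (X : F[X]) ^ i) * (X - 1) = X ^ p - 1 :=
        geom_sum_mul X p
      have h1 : ((X : F[X]) ^ p - 1).natDegree = p := by
        simpa using Polynomial.natDegree_X_pow_sub_C (n := p) (r := (1 : F))
      have h2 : ((X : F[X]) - 1).natDegree = 1 := by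
        simpa using Polynomial.natDegree_X_sub_C (1 : F)
      have hne2 : ((X : F[X]) - 1) ≠ 0 := fun h => by simp [h] at h2
      have := Polynomial.natDegree_mul hgmonic.ne_zero hne2
      rw [hmul, h1, h2] at this
      omega
    -- finrank of F(ζ) over F is at most p - 1
    have hdvd : minpoly F ζ ∣ ∑ i ∈ Finset.range p, X ^ i := minpoly.dvd F ζ hgeom
    have hdegζ : (minpoly F ζ).natDegree ≤ p - 1 := by
      have := Polynomial.natDegree_le_of_dvd hdvd hgmonic.ne_zero
      omega
    have hKrank : Module.finrank F (IntermediateField.adjoin F ({ζ} : Set (AlgebraicClosure F)))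
        ≤ p - 1 := by
      rw [IntermediateField.adjoin.finrank hζint]
      exact hdegζ
    -- F(y) ≤ F(ζ), so p = [F(y):F] ≤ [F(ζ):F] ≤ p - 1, contradiction
    have hle : IntermediateField.adjoin F ({y} : Set (AlgebraicClosure F)) ≤
        IntermediateField.adjoin F ({ζ} : Set (AlgebraicClosure F)) := by
      rw [IntermediateField.adjoin_le_iff]
      simpa using hyK
    have hyrank : Module.finrank F (IntermediateField.adjoin F ({y} : Set (AlgebraicClosure F)))
        = p := by
      rw [IntermediateField.adjoin.finrank hyint, hmin]
      simpa using Polynomial.natDegree_X_pow_sub_C (n := p) (r := x)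
    have hmono : Module.finrank F (IntermediateField.adjoin F ({y} : Set (AlgebraicClosure F)))
        ≤ Module.finrank F (IntermediateField.adjoin F ({ζ} : Set (AlgebraicClosure F))) := by
      haveI : Module.Finite F
          (Subalgebra.toSubmodule (IntermediateField.adjoin F
            ({ζ} : Set (AlgebraicClosure F))).toSubalgebra) := hfd
      exact Submodule.finrank_mono
        (Subalgebra.toSubmodule.monotone
          (IntermediateField.toSubalgebra_le_toSubalgebra.mpr hle))
    have hp2 := hp.two_le
    omega
  · rintro ⟨a, rfl⟩
    exact ⟨algebraMap F (AlgebraicClosure F) a,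
      (IntermediateField.adjoin F _).algebraMap_mem a, by rw [← map_pow]⟩
end

section
/- Let F be a field in which −1 is not a square, and let a be a nonzero element of F such that neither a nor −a is a square in F. Then for every n ≥ 1 and every root α of X^{2^n} − a in an algebraic closure of F, the polynomial X² + 1 has no root in F(α); that is, √−1 ∉ F(α). -/
theorem step_lemma_aux {Ω : Type*} [Field Ω] (K : Subfield Ω) (b β : Ω)
    (hb : b ∈ K) (hβ : β ^ 2 = b)
    (h1 : ¬ ∃ y ∈ K, y ^ 2 = -1) (h2 : ¬ ∃ y ∈ K, y ^ 2 = b)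
    (h3 : ¬ ∃ y ∈ K, y ^ 2 = -b) :
    ∃ L : Subfield Ω, K ≤ L ∧ β ∈ L ∧ (¬ ∃ y ∈ L, y ^ 2 = -1) ∧
      (¬ ∃ y ∈ L, y ^ 2 = β) ∧ (¬ ∃ y ∈ L, y ^ 2 = -β) := by
  have hone : (1 : Ω) ∈ K := K.one_mem
  have htwo : (2 : Ω) ≠ 0 := by
    intro h
    exact h1 ⟨1, hone, by rw [one_pow]; linear_combination h⟩
  have hβK : β ∉ K := fun h => h2 ⟨β, h, hβ⟩
  have key : ∀ w ∈ K, ∀ c ∈ K, w * β = c → w = 0 := by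
    intro w hw c hc hwc
    by_contra hw0
    apply hβK
    have : β = w⁻¹ * c := by field_simp [hw0] at hwc ⊢; linear_combination hwc
    rw [this]; exact K.mul_mem (K.inv_mem hw) hc
  refine ⟨{ carrier := {x | ∃ u ∈ K, ∃ v ∈ K, x = u + v * β}
            zero_mem' := ⟨0, K.zero_mem, 0, K.zero_mem, by ring⟩
            one_mem' := ⟨1, hone, 0, K.zero_mem, by ring⟩
            add_mem' := by
              rintro x y ⟨u, hu, v, hv, rfl⟩ ⟨u', hu', v', hv', rfl⟩
              exact ⟨u + u', K.add_mem hu hu', v + v', K.add_mem hv hv', by ring⟩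
            mul_mem' := by
              rintro x y ⟨u, hu, v, hv, rfl⟩ ⟨u', hu', v', hv', rfl⟩
              refine ⟨u * u' + v * v' * b, K.add_mem (K.mul_mem hu hu')
                (K.mul_mem (K.mul_mem hv hv') hb), u * v' + v * u',
                K.add_mem (K.mul_mem hu hv') (K.mul_mem hv hu'), ?_⟩
              linear_combination (v * v') * hβ
            neg_mem' := by
              rintro x ⟨u, hu, v, hv, rfl⟩
              exact ⟨-u, K.neg_mem hu, -v, K.neg_mem hv, by ring⟩
            inv_mem' := by
              rintro x ⟨u, hu, v, hv, rfl⟩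
              by_cases hx : u + v * β = 0
              · exact ⟨0, K.zero_mem, 0, K.zero_mem, by rw [hx]; simp⟩
              · have hd : u ^ 2 - v ^ 2 * b ≠ 0 := by
                  intro hd0
                  by_cases hv0 : v = 0
                  · apply hx; subst hv0
                    have hu0 : u = 0 := by
                      have h' := hd0; simp at h'
                      simpa [pow_eq_zero_iff] using h'
                    simp [hu0]
                  · exact h2 ⟨u * v⁻¹, K.mul_mem hu (K.inv_mem hv), by
                      field_simp; linear_combination hd0⟩
                refine ⟨u / (u ^ 2 - v ^ 2 * b), K.div_mem hu (K.sub_mem (K.pow_mem hu 2)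
                  (K.mul_mem (K.pow_mem hv 2) hb)),
                  -v / (u ^ 2 - v ^ 2 * b), K.div_mem (K.neg_mem hv) (K.sub_mem (K.pow_mem hu 2)
                  (K.mul_mem (K.pow_mem hv 2) hb)), ?_⟩
                refine inv_eq_of_mul_eq_one_right ?_
                field_simp
                ring_nf
                linear_combination (-(v ^ 2)) * hβ }, ?_, ?_, ?_, ?_, ?_⟩
  · intro x hx
    exact ⟨x, hx, 0, K.zero_mem, by ring⟩
  · exact ⟨0, K.zero_mem, 1, hone, by ring⟩
  · rintro ⟨y, ⟨u, hu, v, hv, rfl⟩, hy⟩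
    have hexp : (2 * (u * v)) * β = -1 - u ^ 2 - v ^ 2 * b := by
      linear_combination hy - v ^ 2 * hβ
    have h0 : 2 * (u * v) = 0 :=
      key _ (K.mul_mem (by rw [show (2:Ω) = 1 + 1 by norm_num]; exact K.add_mem hone hone) (K.mul_mem hu hv)) _
        (K.sub_mem (K.sub_mem (K.neg_mem hone) (K.pow_mem hu 2))
          (K.mul_mem (K.pow_mem hv 2) hb)) hexp
    rcases mul_eq_zero.1 ((mul_eq_zero.1 h0).resolve_left htwo) with h | h
    · subst h
      by_cases hv0 : v = 0
      · subst hv0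
        exact one_ne_zero (by linear_combination hy)
      · refine h3 ⟨v * b, K.mul_mem hv hb, ?_⟩
        have hvb : v ^ 2 * b = -1 := by linear_combination hy - v ^ 2 * hβ
        linear_combination b * hvb
    · subst h
      exact h1 ⟨u, hu, by linear_combination hy⟩
  · rintro ⟨y, ⟨u, hu, v, hv, rfl⟩, hy⟩
    have hexp : (2 * (u * v) - 1) * β = -(u ^ 2) - v ^ 2 * b := by
      linear_combination hy - v ^ 2 * hβ
    have h0 : 2 * (u * v) - 1 = 0 :=
      key _ (K.sub_mem (K.mul_mem (by rw [show (2:Ω) = 1 + 1 by norm_num]; exact K.add_mem hone hone) (K.mul_mem hu hv)) hone)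
        _ (K.sub_mem (K.neg_mem (K.pow_mem hu 2)) (K.mul_mem (K.pow_mem hv 2) hb)) hexp
    have hv0 : v ≠ 0 := by
      intro h; subst h
      exact one_ne_zero (by linear_combination -h0)
    have hsum : u ^ 2 + v ^ 2 * b = 0 := by
      have h' := hexp; rw [h0, zero_mul] at h'; linear_combination h'
    exact h3 ⟨u * v⁻¹, K.mul_mem hu (K.inv_mem hv), by
      field_simp; linear_combination hsum⟩
  · rintro ⟨y, ⟨u, hu, v, hv, rfl⟩, hy⟩
    have hexp : (2 * (u * v) + 1) * β = -(u ^ 2) - v ^ 2 * b := by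
      linear_combination hy - v ^ 2 * hβ
    have h0 : 2 * (u * v) + 1 = 0 :=
      key _ (K.add_mem (K.mul_mem (by rw [show (2:Ω) = 1 + 1 by norm_num]; exact K.add_mem hone hone) (K.mul_mem hu hv)) hone)
        _ (K.sub_mem (K.neg_mem (K.pow_mem hu 2)) (K.mul_mem (K.pow_mem hv 2) hb)) hexp
    have hv0 : v ≠ 0 := by
      intro h; subst h
      exact one_ne_zero (by linear_combination h0)
    have hsum : u ^ 2 + v ^ 2 * b = 0 := by
      have h' := hexp; rw [h0, zero_mul] at h'; linear_combination h'
    exact h3 ⟨u * v⁻¹, K.mul_mem hu (K.inv_mem hv), by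
      field_simp; linear_combination hsum⟩

theorem tower_aux {F Ω : Type*} [Field F] [Field Ω] (f : F →+* Ω)
    (hsq : ¬ ∃ x : F, x ^ 2 = -1)
    (a : F) (ha1 : ¬ ∃ x : F, x ^ 2 = a) (ha2 : ¬ ∃ x : F, x ^ 2 = -a) :
    ∀ (n : ℕ) (α : Ω), α ^ 2 ^ n = f a →
      ∃ L : Subfield Ω, (∀ x : F, f x ∈ L) ∧ α ∈ L ∧
        (¬ ∃ y ∈ L, y ^ 2 = -1) ∧ (¬ ∃ y ∈ L, y ^ 2 = α) ∧ (¬ ∃ y ∈ L, y ^ 2 = -α) := by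
  have hinj : Function.Injective f := f.injective
  intro n
  induction n with
  | zero =>
    intro α hα
    simp only [pow_zero, pow_one] at hα
    subst hα
    refine ⟨f.fieldRange, fun x => ⟨x, rfl⟩, ⟨a, rfl⟩, ?_, ?_, ?_⟩
    · rintro ⟨y, ⟨x, rfl⟩, hy⟩
      exact hsq ⟨x, hinj (by rw [map_pow, hy, map_neg, map_one])⟩
    · rintro ⟨y, ⟨x, rfl⟩, hy⟩
      exact ha1 ⟨x, hinj (by rw [map_pow, hy])⟩
    · rintro ⟨y, ⟨x, rfl⟩, hy⟩
      exact ha2 ⟨x, hinj (by rw [map_pow, hy, map_neg])⟩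
  | succ n ih =>
    intro α hα
    have hβ : (α ^ 2) ^ 2 ^ n = f a := by
      rw [← pow_mul, ← pow_succ']; exact hα
    obtain ⟨L₀, hL₀f, hβL₀, hm1, hb1, hb2⟩ := ih (α ^ 2) hβ
    obtain ⟨L, hle, hαL, g1, g2, g3⟩ := step_lemma_aux L₀ (α ^ 2) α hβL₀ rfl hm1 hb1 hb2
    exact ⟨L, fun x => hle (hL₀f x), hαL, g1, g2, g3⟩

theorem lemma2_sqrt_neg_one
    {F : Type*} [Field F] (hsq : ¬ ∃ x : F, x ^ 2 = -1)
    (a : F) (ha : a ≠ 0)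
    (ha1 : ¬ ∃ x : F, x ^ 2 = a) (ha2 : ¬ ∃ x : F, x ^ 2 = -a)
    (n : ℕ) (hn : 1 ≤ n)
    (α : AlgebraicClosure F)
    (hα : α ^ 2 ^ n = algebraMap F (AlgebraicClosure F) a) :
    ¬ ∃ y ∈ IntermediateField.adjoin F ({α} : Set (AlgebraicClosure F)), y ^ 2 = -1 := by
  obtain ⟨L, hLf, hαL, hm1, -, -⟩ :=
    tower_aux (algebraMap F (AlgebraicClosure F)) hsq a ha1 ha2 n α hα
  rintro ⟨y, hy, hy2⟩
  apply hm1
  refine ⟨y, ?_, hy2⟩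
  have hle : IntermediateField.adjoin F ({α} : Set (AlgebraicClosure F)) ≤
      L.toIntermediateField hLf := by
    rw [IntermediateField.adjoin_le_iff]
    intro z hz
    rw [Set.mem_singleton_iff] at hz
    subst hz
    exact hαL
  exact hle hy
end

section
/- Let F be a field in which −1 is not a square, and let a be a nonzero element of F such that neither a nor −a is a square in F. Then for every n ≥ 1 and every root α of X^{2^n} − a in an algebraic closure of F, neither α nor −α is the square of an element of F(α). -/
open IntermediateField in
theorem repr_aux {F : Type*} [Field F] (α : AlgebraicClosure F) (y : AlgebraicClosure F)
    (hy : y ∈ adjoin F ({α} : Set (AlgebraicClosure F))) :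
    ∃ c ∈ adjoin F ({α ^ 2} : Set (AlgebraicClosure F)),
      ∃ d ∈ adjoin F ({α ^ 2} : Set (AlgebraicClosure F)), y = c + d * α := by
  set K := adjoin F ({α ^ 2} : Set (AlgebraicClosure F)) with hK
  have hint : IsIntegral F α := Algebra.IsIntegral.isIntegral α
  have h1 : y ∈ (adjoin F ({α} : Set (AlgebraicClosure F))).toSubalgebra := hy
  rw [adjoin_simple_toSubalgebra_of_isAlgebraic hint.isAlgebraic] at h1
  clear hy
  have hβ : α ^ 2 ∈ K := subset_adjoin F _ rfl
  induction h1 using Algebra.adjoin_induction with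
  | mem x hx =>
    rw [Set.mem_singleton_iff] at hx
    exact ⟨0, zero_mem K, 1, one_mem K, by rw [hx]; ring⟩
  | algebraMap x => exact ⟨algebraMap F _ x, IntermediateField.algebraMap_mem K x, 0, zero_mem K, by ring⟩
  | add x y' hx hy' ihx ihy =>
    obtain ⟨c, hc, d, hd, rfl⟩ := ihx
    obtain ⟨c', hc', d', hd', rfl⟩ := ihy
    exact ⟨c + c', add_mem hc hc', d + d', add_mem hd hd', by ring⟩
  | mul x y' hx hy' ihx ihy =>
    obtain ⟨c, hc, d, hd, rfl⟩ := ihx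
    obtain ⟨c', hc', d', hd', rfl⟩ := ihy
    exact ⟨c * c' + d * d' * α ^ 2, add_mem (mul_mem hc hc') (mul_mem (mul_mem hd hd') hβ),
      c * d' + d * c', add_mem (mul_mem hc hd') (mul_mem hd hc'), by ring⟩

open IntermediateField in
theorem main_aux {F : Type*} [Field F] (hsq : ¬ ∃ x : F, x ^ 2 = -1)
    (a : F) (ha1 : ¬ ∃ x : F, x ^ 2 = a) (ha2 : ¬ ∃ x : F, x ^ 2 = -a)
    (n : ℕ) :
    ∀ α : AlgebraicClosure F, α ^ 2 ^ n = algebraMap F (AlgebraicClosure F) a →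
      (¬ ∃ y ∈ adjoin F ({α} : Set (AlgebraicClosure F)), y ^ 2 = -1) ∧
      (¬ ∃ y ∈ adjoin F ({α} : Set (AlgebraicClosure F)), y ^ 2 = α) ∧
      (¬ ∃ y ∈ adjoin F ({α} : Set (AlgebraicClosure F)), y ^ 2 = -α) := by
  have hinj : Function.Injective (algebraMap F (AlgebraicClosure F)) :=
    (algebraMap F (AlgebraicClosure F)).injective
  induction n with
  | zero =>
    intro α hα
    simp only [pow_zero, pow_one] at hα
    subst hα
    have hbot : adjoin F ({algebraMap F (AlgebraicClosure F) a} : Set (AlgebraicClosure F)) ≤ ⊥ := by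
      rw [adjoin_le_iff]
      rintro x rfl
      exact ⟨a, rfl⟩
    refine ⟨?_, ?_, ?_⟩
    · rintro ⟨y, hy, h2⟩
      obtain ⟨x, rfl⟩ := mem_bot.mp (hbot hy)
      exact hsq ⟨x, hinj (by rw [map_pow, h2, map_neg, map_one])⟩
    · rintro ⟨y, hy, h2⟩
      obtain ⟨x, rfl⟩ := mem_bot.mp (hbot hy)
      exact ha1 ⟨x, hinj (by rw [map_pow, h2])⟩
    · rintro ⟨y, hy, h2⟩
      obtain ⟨x, rfl⟩ := mem_bot.mp (hbot hy)
      exact ha2 ⟨x, hinj (by rw [map_pow, h2, map_neg])⟩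
  | succ n ih =>
    intro α hα
    have hβ : (α ^ 2) ^ 2 ^ n = algebraMap F (AlgebraicClosure F) a := by
      rw [← pow_mul, ← pow_succ']; exact hα
    obtain ⟨h1, h2, h3⟩ := ih (α ^ 2) hβ
    set K := adjoin F ({α ^ 2} : Set (AlgebraicClosure F)) with hKdef
    -- α ∉ K
    have hαK : α ∉ K := fun h => h2 ⟨α, h, rfl⟩
    have twoF : (2 : F) ≠ 0 := fun h2 => hsq ⟨1, by linear_combination h2⟩
    have two_ne : (2 : AlgebraicClosure F) ≠ 0 := by
      intro h
      exact twoF (hinj (show algebraMap F (AlgebraicClosure F) 2 = algebraMap F _ 0 by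
        rw [map_ofNat, map_zero, h]))
    have h2K : (2 : AlgebraicClosure F) ∈ K := by
      rw [show (2 : AlgebraicClosure F) = 1 + 1 by norm_num]
      exact add_mem (one_mem K) (one_mem K)
    -- key: from c d ∈ K with c^2 + d^2 * α^2 = 0 and 2cd = ε ≠ 0, contradiction
    have key : ∀ ε : AlgebraicClosure F, ε = 1 ∨ ε = -1 →
        ¬ ∃ y ∈ adjoin F ({α} : Set (AlgebraicClosure F)), y ^ 2 = ε * α := by
      rintro ε hε ⟨y, hy, hsq2⟩
      obtain ⟨c, hc, d, hd, rfl⟩ := repr_aux α y hy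
      have expand : (c ^ 2 + d ^ 2 * α ^ 2) + (2 * c * d) * α = ε * α := by
        rw [← hsq2]; ring
      have hεne : ε ≠ 0 := by rcases hε with rfl | rfl <;> simp
      by_cases hcd : 2 * c * d = ε
      · -- c^2 + d^2 α^2 = 0, cd ≠ 0
        have hce : c ^ 2 + d ^ 2 * α ^ 2 = 0 := by
          have := expand
          rw [hcd] at this
          linear_combination this
        have hdne : d ≠ 0 := by
          rintro rfl
          apply hεne; rw [← hcd]; ring
        have hcne : c ≠ 0 := by
          rintro rfl
          apply hεne; rw [← hcd]; ring
        -- -(α^2) = (c/d)^2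
        apply h3
        refine ⟨c / d, div_mem hc hd, ?_⟩
        field_simp
        linear_combination hce
      · -- α ∈ K
        apply hαK
        have : α = (ε - 2 * c * d)⁻¹ * (c ^ 2 + d ^ 2 * α ^ 2) := by
          have hne : ε - 2 * c * d ≠ 0 := sub_ne_zero.mpr (fun h => hcd h.symm)
          field_simp
          linear_combination -expand
        rw [this]
        have hεK : ε ∈ K := by rcases hε with rfl | rfl
                               · exact one_mem K
                               · exact neg_mem (one_mem K)
        have hβK : α ^ 2 ∈ K := subset_adjoin F _ rfl
        exact mul_mem (inv_mem (sub_mem hεK (mul_mem (mul_mem h2K hc) hd)))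
          (add_mem (pow_mem hc 2) (mul_mem (pow_mem hd 2) hβK))
    refine ⟨?_, ?_, ?_⟩
    · rintro ⟨y, hy, hsq2⟩
      obtain ⟨c, hc, d, hd, rfl⟩ := repr_aux α y hy
      have expand : (c ^ 2 + d ^ 2 * α ^ 2 + 1) + (2 * c * d) * α = 0 := by
        rw [show (0:AlgebraicClosure F) = -1 + 1 by ring, ← hsq2]; ring
      by_cases hcd : 2 * c * d = 0
      · have hce : c ^ 2 + d ^ 2 * α ^ 2 + 1 = 0 := by
          have := expand; rw [hcd] at this; linear_combination this
        rcases mul_eq_zero.mp hcd with h2c | hd0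
        case _ =>
          obtain rfl : c = 0 := (mul_eq_zero.mp h2c).resolve_left two_ne
          -- c = 0 : d^2 α^2 = -1
          rcases eq_or_ne d 0 with rfl | hdne
          · exact one_ne_zero (α := AlgebraicClosure F) (by linear_combination hce)
          · apply h3
            refine ⟨d⁻¹, inv_mem hd, ?_⟩
            field_simp
            linear_combination hce
        case _ =>
          obtain rfl : d = 0 := hd0
          apply h1
          refine ⟨c, hc, ?_⟩
          linear_combination hce
      · apply hαK
        have : α = (2 * c * d)⁻¹ * (-(c ^ 2 + d ^ 2 * α ^ 2 + 1)) := by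
          rw [eq_inv_mul_iff_mul_eq₀ hcd]
          linear_combination expand
        rw [this]
        have hβK : α ^ 2 ∈ K := subset_adjoin F _ rfl
        exact mul_mem (inv_mem (mul_mem (mul_mem h2K hc) hd))
          (neg_mem (add_mem (add_mem (pow_mem hc 2) (mul_mem (pow_mem hd 2) hβK)) (one_mem K)))
    · have := key 1 (Or.inl rfl)
      simpa using this
    · have := key (-1) (Or.inr rfl)
      simpa using this

theorem lemma2_root_not_square
    {F : Type*} [Field F] (hsq : ¬ ∃ x : F, x ^ 2 = -1)
    (a : F) (ha : a ≠ 0)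
    (ha1 : ¬ ∃ x : F, x ^ 2 = a) (ha2 : ¬ ∃ x : F, x ^ 2 = -a)
    (n : ℕ) (hn : 1 ≤ n)
    (α : AlgebraicClosure F)
    (hα : α ^ 2 ^ n = algebraMap F (AlgebraicClosure F) a) :
    (¬ ∃ y ∈ IntermediateField.adjoin F ({α} : Set (AlgebraicClosure F)), y ^ 2 = α) ∧
    (¬ ∃ y ∈ IntermediateField.adjoin F ({α} : Set (AlgebraicClosure F)), y ^ 2 = -α) := by
  obtain ⟨-, h2, h3⟩ := main_aux hsq a ha1 ha2 n α hα
  exact ⟨h2, h3⟩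
end

section
/- Let F be a field with char F ≠ 2, let n ≥ 1, let ζ be a primitive 2^n-th root of unity in an algebraic closure of F, and let K = F(ζ). If n ≤ 2 or −1 is a square in F, then the Galois group Gal(K/F) is cyclic. -/
open Subgroup

lemma aux_five_pow (k : ℕ) : ∃ u : ℕ, Odd u ∧ 5 ^ (2 ^ k) = 1 + 2 ^ (k + 2) * u := by
  induction k with
  | zero => exact ⟨1, odd_one, by norm_num⟩
  | succ k ih =>
    obtain ⟨u, hu, hk⟩ := ih
    refine ⟨u + 2 ^ (k + 1) * u ^ 2, ?_, ?_⟩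
    · rcases hu with ⟨m, rfl⟩
      exact ⟨m + 2 ^ k * (2 * m + 1) ^ 2, by ring⟩
    · have h2 : 5 ^ (2 ^ (k + 1)) = (5 ^ (2 ^ k)) ^ 2 := by
        rw [← pow_mul, pow_succ]
      rw [h2, hk]; ring

lemma aux_orderOf_five {n : ℕ} (hn : 3 ≤ n) :
    orderOf (ZMod.unitOfCoprime (n := 2 ^ n) 5
      (Nat.Coprime.pow_right n (by decide))) = 2 ^ (n - 2) := by
  haveI : NeZero (2 ^ n) := ⟨pow_ne_zero _ two_ne_zero⟩
  set f : (ZMod (2 ^ n))ˣ := ZMod.unitOfCoprime 5 (Nat.Coprime.pow_right n (by decide)) with hf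
  have hcoe : (f : ZMod (2 ^ n)) = ((5 : ℕ) : ZMod (2 ^ n)) := by simp [hf]
  have h0 : ((2 ^ n : ℕ) : ZMod (2 ^ n)) = 0 := ZMod.natCast_self _
  have hpow1 : f ^ (2 ^ (n - 2)) = 1 := by
    ext
    rw [Units.val_pow_eq_pow_val, hcoe, Units.val_one, ← Nat.cast_pow]
    obtain ⟨u, hu, he⟩ := aux_five_pow (n - 2)
    have hn2 : n - 2 + 2 = n := by omega
    rw [he, hn2, Nat.cast_add, Nat.cast_mul, h0]
    simp
  have hpow2 : f ^ (2 ^ (n - 3)) ≠ 1 := by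
    intro hcon
    obtain ⟨u, hu, he⟩ := aux_five_pow (n - 3)
    have hn3 : n - 3 + 2 = n - 1 := by omega
    have hval : ((5 ^ (2 ^ (n - 3)) : ℕ) : ZMod (2 ^ n)) = ((1 : ℕ) : ZMod (2 ^ n)) := by
      have := congrArg (Units.val) hcon
      rw [Units.val_pow_eq_pow_val, hcoe, Units.val_one, ← Nat.cast_pow] at this
      rw [this, Nat.cast_one]
    rw [ZMod.natCast_eq_natCast_iff, he, hn3] at hval
    have hdvd : 2 ^ n ∣ 2 ^ (n - 1) * u := by
      have := (Nat.modEq_iff_dvd' (Nat.le_add_right 1 _)).mp hval.symm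
      simpa using this
    have h2n : 2 ^ n = 2 ^ (n - 1) * 2 := by
      rw [← pow_succ]; congr 1; omega
    rw [h2n, mul_dvd_mul_iff_left (pow_ne_zero (n - 1) (two_ne_zero))] at hdvd
    rw [Nat.odd_iff] at hu
    omega
  have hd := orderOf_dvd_of_pow_eq_one hpow1
  obtain ⟨j, hj, hje⟩ := (Nat.dvd_prime_pow Nat.prime_two).mp hd
  have hjeq : j = n - 2 := by
    by_contra hne
    have hj3 : j ≤ n - 3 := by omega
    exact hpow2 (orderOf_dvd_iff_pow_eq_one.mp (hje ▸ pow_dvd_pow 2 hj3))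
  rw [hje, hjeq]

lemma aux_zpowers_isCyclic {C : Type*} [Group C] (g : C) : IsCyclic (zpowers g) := by
  refine ⟨⟨g, mem_zpowers g⟩, fun x => ?_⟩
  obtain ⟨y, hy⟩ := x
  obtain ⟨m, rfl⟩ := hy
  exact ⟨m, by ext; simp⟩

lemma aux_ker_isCyclic {n : ℕ} (hn : 3 ≤ n) (h4 : (4 : ℕ) ∣ 2 ^ n) :
    IsCyclic (ZMod.unitsMap (m := 2 ^ n) (n := 4) h4).ker := by
  haveI : NeZero (2 ^ n) := ⟨pow_ne_zero _ two_ne_zero⟩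
  set five : (ZMod (2 ^ n))ˣ := ZMod.unitOfCoprime 5 (Nat.Coprime.pow_right n (by decide))
    with hfive
  have hcardG : Nat.card (ZMod (2 ^ n))ˣ = 2 ^ (n - 1) := by
    rw [Nat.card_eq_fintype_card, ZMod.card_units_eq_totient,
      Nat.totient_prime_pow Nat.prime_two (by omega)]
    simp
  have hrange : Nat.card (ZMod.unitsMap (m := 2 ^ n) (n := 4) h4).range = 2 := by
    rw [MonoidHom.range_eq_top.mpr (ZMod.unitsMap_surjective h4), card_top,
      Nat.card_eq_fintype_card]
    decide
  have hker : Nat.card (ZMod.unitsMap (m := 2 ^ n) (n := 4) h4).ker * 2 = 2 ^ (n - 1) := by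
    have h := Subgroup.card_mul_index (ZMod.unitsMap (m := 2 ^ n) (n := 4) h4).ker
    rw [Subgroup.index_ker, hrange, hcardG] at h
    exact h
  have hkercard : Nat.card (ZMod.unitsMap (m := 2 ^ n) (n := 4) h4).ker = 2 ^ (n - 2) := by
    have h2 : 2 ^ (n - 1) = 2 ^ (n - 2) * 2 := by
      rw [← pow_succ]; congr 1; omega
    omega
  have hmem : five ∈ (ZMod.unitsMap (m := 2 ^ n) (n := 4) h4).ker := by
    rw [MonoidHom.mem_ker]
    ext
    rw [ZMod.unitsMap_def]
    have : (five : ZMod (2 ^ n)) = ((5 : ℕ) : ZMod (2 ^ n)) := by simp [hfive]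
    rw [Units.coe_map, Units.val_one]
    simp only [MonoidHom.coe_coe, this, map_natCast]
    decide
  have hle : zpowers five ≤ (ZMod.unitsMap (m := 2 ^ n) (n := 4) h4).ker := zpowers_le.mpr hmem
  have hzcard : Nat.card (zpowers five) = 2 ^ (n - 2) := by
    rw [Nat.card_zpowers, aux_orderOf_five hn]
  have hseteq : (zpowers five : Set (ZMod (2 ^ n))ˣ)
      = ((ZMod.unitsMap (m := 2 ^ n) (n := 4) h4).ker : Set (ZMod (2 ^ n))ˣ) := by
    apply Set.eq_of_subset_of_ncard_le hle ?_ (Set.toFinite _)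
    rw [← Nat.card_coe_set_eq, ← Nat.card_coe_set_eq]
    simp only [SetLike.coe_sort_coe]
    rw [hzcard, hkercard]
  have heq : zpowers five = (ZMod.unitsMap (m := 2 ^ n) (n := 4) h4).ker :=
    SetLike.ext' hseteq
  exact heq ▸ aux_zpowers_isCyclic five

lemma aux_isCyclic_of_injective {G C : Type*} [Group G] [Group C] [IsCyclic C]
    (f : G →* C) (hf : Function.Injective f) : IsCyclic G :=
  isCyclic_of_surjective (MonoidHom.ofInjective hf).symm.toMonoidHom
    (MonoidHom.ofInjective hf).symm.surjective

theorem lemma3_cyclotomic_two_power_cyclic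
    {F : Type*} [Field F] (hchar : ringChar F ≠ 2)
    (n : ℕ) (hn : 1 ≤ n)
    (ζ : AlgebraicClosure F) (hζ : IsPrimitiveRoot ζ (2 ^ n))
    (h : n ≤ 2 ∨ ∃ x : F, x ^ 2 = -1) :
    IsCyclic ((IntermediateField.adjoin F ({ζ} : Set (AlgebraicClosure F))) ≃ₐ[F]
      (IntermediateField.adjoin F ({ζ} : Set (AlgebraicClosure F)))) := by
  haveI : NeZero ((2 : ℕ) ^ n) := ⟨pow_ne_zero _ two_ne_zero⟩
  set K := IntermediateField.adjoin F ({ζ} : Set (AlgebraicClosure F)) with hK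
  have hint : IsIntegral F ζ := Algebra.IsIntegral.isIntegral ζ
  set N : ℕ+ := ⟨2 ^ n, pow_pos two_pos n⟩ with hN
  have hζ' : IsPrimitiveRoot ζ ((N : ℕ)) := hζ
  haveI inst1 : IsCyclotomicExtension {(N : ℕ)} F
      (Algebra.adjoin F ({ζ} : Set (AlgebraicClosure F))) :=
    hζ'.adjoin_isCyclotomicExtension F
  have hsub : K.toSubalgebra = Algebra.adjoin F ({ζ} : Set (AlgebraicClosure F)) :=
    IntermediateField.adjoin_simple_toSubalgebra_of_isAlgebraic hint.isAlgebraic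
  haveI inst2 : IsCyclotomicExtension {(N : ℕ)} F K :=
    IsCyclotomicExtension.equiv _ F _
      ((Subalgebra.equivOfEq _ _ hsub.symm) :
        (Algebra.adjoin F ({ζ} : Set (AlgebraicClosure F))) ≃ₐ[F] K)
  set ζK : K := ⟨ζ, IntermediateField.mem_adjoin_simple_self F ζ⟩ with hζKdef
  have hζK : IsPrimitiveRoot ζK (2 ^ n) :=
    IsPrimitiveRoot.coe_submonoidClass_iff.mp hζ
  have hζK' : IsPrimitiveRoot ζK ((N : ℕ)) := hζK
  have hinj : Function.Injective (hζK.autToPow F) := hζK'.autToPow_injective F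
  rcases le_or_gt n 2 with hn2 | hn3
  · haveI : Fact (Nat.Prime 2) := ⟨Nat.prime_two⟩
    haveI : IsCyclic (ZMod (2 ^ n))ˣ := by
      apply isCyclic_of_card_dvd_prime (p := 2)
      rw [Nat.card_eq_fintype_card, ZMod.card_units_eq_totient]
      interval_cases n <;> decide
    exact aux_isCyclic_of_injective _ hinj
  · have hn3 : 3 ≤ n := hn3
    have h4 : (4 : ℕ) ∣ 2 ^ n := by
      refine ⟨2 ^ (n - 2), ?_⟩
      rw [show (4 : ℕ) = 2 ^ 2 by norm_num, ← pow_add]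
      congr 1; omega
    obtain ⟨x, hx⟩ : ∃ x : F, x ^ 2 = -1 := by
      rcases h with h | h
      · omega
      · exact h
    haveI := aux_ker_isCyclic hn3 h4
    -- the fourth root of unity in K
    set i : K := ζK ^ (2 ^ (n - 2)) with hidef
    have hi : IsPrimitiveRoot i 4 := by
      refine hζK.pow (pow_pos two_pos n) ?_
      rw [show (4 : ℕ) = 2 ^ 2 by norm_num, ← pow_add]
      congr 1; omega
    have hi0 : i ≠ 0 := hi.ne_zero (by norm_num)
    have hx' : (algebraMap F K x) ^ 2 = -1 := by
      rw [← map_pow, hx, map_neg, map_one]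
    have hii : i = algebraMap F K x ∨ i = -(algebraMap F K x) := by
      have h2 : i ^ 2 = (algebraMap F K x) ^ 2 := by
        rw [hx']
        have h2' : IsPrimitiveRoot (ζK ^ (2 ^ (n - 1))) 2 := by
          refine hζK.pow (pow_pos two_pos n) ?_
          rw [← pow_succ]; congr 1; omega
        have := h2'.eq_neg_one_of_two_right
        rw [hidef, ← pow_mul, show 2 ^ (n - 2) * 2 = 2 ^ (n - 1) by
          rw [← pow_succ]; congr 1; omega]
        exact this
      rw [sq, sq] at h2
      exact mul_self_eq_mul_self_iff.mp h2
    have hfix : ∀ σ : K ≃ₐ[F] K, σ i = i := by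
      intro σ
      rcases hii with hie | hie
      · rw [hie, AlgEquiv.commutes]
      · rw [hie, map_neg, AlgEquiv.commutes]
    have hmemker : ∀ σ : K ≃ₐ[F] K,
        hζK.autToPow F σ ∈ (ZMod.unitsMap (m := 2 ^ n) (n := 4) h4).ker := by
      intro σ
      set u := hζK.autToPow F σ with hu
      set v := ((u : ZMod (2 ^ n)).val) with hv
      have hspec : ζK ^ v = σ ζK := hζK.autToPow_spec F σ
      have hiv : i ^ v = i := by
        have : σ i = i ^ v := by
          rw [hidef, map_pow, ← hspec, ← pow_mul, ← pow_mul, mul_comm]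
        rw [← this, hfix σ]
      have hvne : v ≠ 0 := by
        intro hv0
        have hcop := ZMod.val_coe_unit_coprime u
        rw [← hv, hv0, Nat.coprime_zero_left] at hcop
        have : (2 : ℕ) ^ n ≥ 2 := by
          calc (2 : ℕ) ^ 1 ≤ 2 ^ n := Nat.pow_le_pow_right (by norm_num) hn
          _ = 2 ^ n := rfl
        omega
      have hdvd : 4 ∣ v - 1 := by
        apply hi.pow_eq_one_iff_dvd (v - 1) |>.mp
        have h1 : i ^ (v - 1) * i = 1 * i := by
          rw [one_mul, ← pow_succ, Nat.sub_add_cancel (Nat.one_le_iff_ne_zero.mpr hvne), hiv]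
        exact mul_right_cancel₀ hi0 h1
      have hv4 : ((v : ℕ) : ZMod 4) = 1 := by
        obtain ⟨c, hc⟩ := hdvd
        have hvc : v = 1 + 4 * c := by omega
        rw [hvc]
        push_cast
        rw [show (4 : ZMod 4) = 0 by decide]
        ring
      rw [MonoidHom.mem_ker]
      ext
      rw [ZMod.unitsMap_def, Units.coe_map, Units.val_one]
      have hucast : (u : ZMod (2 ^ n)) = ((v : ℕ) : ZMod (2 ^ n)) := by
        rw [hv, ZMod.natCast_val, ZMod.cast_id]
      simp only [MonoidHom.coe_coe, hucast, map_natCast]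
      exact hv4
    exact aux_isCyclic_of_injective
      (MonoidHom.codRestrict (hζK.autToPow F) _ hmemker)
      (fun a b hab => hinj (by simpa using congrArg Subtype.val hab))
end

section
/- Let D be a unique factorization domain with field of fractions F, let ℓ ≥ 1, and let N_1,…,N_ℓ be nonzero elements of D. If no element of S_2 is a square in D, then at most one element of S_2 lies in −D² = {−d² : d ∈ D}; moreover, if −1 is a square in F, then no element of S_2 lies in −D². -/
/-- The set `S_2` of products `N₁^{e₁} ⋯ N_{k-1}^{e_{k-1}} · N_k` with `1 ≤ k ≤ ℓ`
and `eᵢ ∈ {0, 1}`. -/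
def Sset {D : Type*} [CommMonoid D] {ℓ : ℕ} (N : Fin ℓ → D) (p : ℕ) : Set D :=
  {x | ∃ k : Fin ℓ, ∃ e : Fin ℓ → ℕ, (∀ j, e j < p) ∧ e k = 1 ∧ (∀ j, k < j → e j = 0) ∧
    x = ∏ j, N j ^ e j}

lemma sq_of_sq_frac {D F : Type*} [CommRing D] [IsDomain D] [UniqueFactorizationMonoid D]
    [Field F] [Algebra D F] [IsFractionRing D F] {z : D} {t : F}
    (ht : t ^ 2 = algebraMap D F z) : ∃ d : D, z = d ^ 2 := by
  have hint : IsIntegral D t := by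
    refine ⟨Polynomial.X ^ 2 - Polynomial.C z,
      Polynomial.monic_X_pow_sub_C z (by norm_num), ?_⟩
    simp [ht]
  obtain ⟨d, hd⟩ := IsIntegrallyClosed.isIntegral_iff.mp hint
  refine ⟨d, IsFractionRing.injective D F ?_⟩
  rw [map_pow, hd, ht]

lemma key_eq {D F : Type*} [CommRing D] [IsDomain D] [UniqueFactorizationMonoid D]
    [Field F] [Algebra D F] [IsFractionRing D F]
    {ℓ : ℕ} (N : Fin ℓ → D) (hN : ∀ i, N i ≠ 0)
    (h : ¬ ∃ x ∈ Sset N 2, ∃ d : D, x = d ^ 2)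
    {x y a b : D} (hx : x ∈ Sset N 2) (hy : y ∈ Sset N 2)
    (ha : x = -a ^ 2) (hb : y = -b ^ 2) : x = y := by
  obtain ⟨k, e, he2, hek, hetop, hxe⟩ := hx
  obtain ⟨k', f, hf2, hfk, hftop, hyf⟩ := hy
  by_contra hxy
  have hef : ∃ j, e j ≠ f j := by
    by_contra hc
    push_neg at hc
    exact hxy (by rw [hxe, hyf]; exact Finset.prod_congr rfl fun j _ => by rw [hc j])
  set s : Finset (Fin ℓ) := Finset.univ.filter (fun j => e j ≠ f j) with hs
  have hsne : s.Nonempty := by obtain ⟨j, hj⟩ := hef; exact ⟨j, by simp [hs, hj]⟩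
  set m := s.max' hsne with hm
  set g : Fin ℓ → ℕ := fun j => (e j + f j) % 2 with hg
  have hgm : g m = 1 := by
    have hmem : m ∈ s := s.max'_mem hsne
    have h3 : e m ≠ f m := by simpa [hs] using hmem
    have h1 := he2 m
    have h2 := hf2 m
    show (e m + f m) % 2 = 1
    omega
  have hgtop : ∀ j, m < j → g j = 0 := by
    intro j hj
    have h3 : e j = f j := by
      by_contra hne
      exact absurd (s.le_max' j (by simp [hs, hne])) (not_le.mpr hj)
    have h1 := he2 j
    show (e j + f j) % 2 = 0
    omega
  set z := ∏ j, N j ^ g j with hz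
  set d := ∏ j, N j ^ ((e j + f j) / 2) with hd
  have hzmem : z ∈ Sset N 2 := ⟨m, g, fun j => Nat.mod_lt _ two_pos, hgm, hgtop, rfl⟩
  have hzd : z * d ^ 2 = x * y := by
    rw [hz, hd, hxe, hyf, ← Finset.prod_pow, ← Finset.prod_mul_distrib,
      ← Finset.prod_mul_distrib]
    refine Finset.prod_congr rfl fun j _ => ?_
    rw [← pow_mul, ← pow_add, ← pow_add]
    congr 1
    simp only [hg]
    omega
  have hab : x * y = (a * b) ^ 2 := by rw [ha, hb]; ring
  have hd0 : d ≠ 0 := Finset.prod_ne_zero_iff.mpr fun j _ => pow_ne_zero _ (hN j)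
  have hdF : algebraMap D F d ≠ 0 :=
    (map_ne_zero_iff _ (IsFractionRing.injective D F)).mpr hd0
  have ht : (algebraMap D F (a * b) / algebraMap D F d) ^ 2 = algebraMap D F z := by
    rw [div_pow, ← map_pow, ← map_pow, ← hab, ← hzd, map_mul, map_pow]
    field_simp
  exact h ⟨z, hzmem, sq_of_sq_frac ht⟩

theorem lemma5
    {D F : Type*} [CommRing D] [IsDomain D] [UniqueFactorizationMonoid D]
    [Field F] [Algebra D F] [IsFractionRing D F]
    {ℓ : ℕ} (hℓ : 1 ≤ ℓ) (N : Fin ℓ → D) (hN : ∀ i, N i ≠ 0)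
    (h : ¬ ∃ x ∈ Sset N 2, ∃ d : D, x = d ^ 2) :
    {x ∈ Sset N 2 | ∃ d : D, x = -d ^ 2}.ncard ≤ 1 ∧
    ((∃ c : F, c ^ 2 = -1) → {x ∈ Sset N 2 | ∃ d : D, x = -d ^ 2} = ∅) := by
  constructor
  · have hsub : ({x ∈ Sset N 2 | ∃ d : D, x = -d ^ 2}).Subsingleton := by
      rintro x ⟨hx, a, ha⟩ y ⟨hy, b, hb⟩
      exact key_eq (F := F) N hN h hx hy ha hb
    rcases hsub.eq_empty_or_singleton with he | ⟨a, he⟩ <;> simp [he]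
  · rintro ⟨c, hc⟩
    rw [Set.eq_empty_iff_forall_notMem]
    rintro x ⟨hx, a, ha⟩
    refine h ⟨x, hx, sq_of_sq_frac (t := c * algebraMap D F a) ?_⟩
    rw [mul_pow, hc, ha, map_neg, map_pow]
    ring
end

section
/- Let D be a unique factorization domain with field of fractions F, let ℓ ≥ 1, let N_1,…,N_ℓ be nonzero elements of D, let p be a prime with char F ≠ p, and let m_i = p^{n_i} with n_i ≥ 1 for each i. Let m = lcm(m_1,…,m_ℓ), let ζ be a primitive m-th root of unity in an algebraic closure of F, and let K = F(ζ). If no element of S_p is a p-th power of an element of K, then for every choice of roots α_i of X^{m_i} − N_i in the algebraic closure, [K(α_1,…,α_ℓ) : K] = m_1⋯m_ℓ. -/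
set_option maxHeartbeats 1000000

open Polynomial IntermediateField

section Step

universe u
variable {B Ω : Type u} [Field B] [Field Ω] [Algebra B Ω]
variable {p : ℕ} (hp : p.Prime) {b : B} (hb : b ≠ 0)
variable {δ : Ω} (hδ : δ ^ p = algebraMap B Ω b)
variable (H : Irreducible (X ^ p - C b))

include hp hδ H

lemma int_delta : IsIntegral B δ :=
  ⟨X ^ p - C b, monic_X_pow_sub_C b hp.ne_zero, by simp [hδ]⟩

lemma minpoly_delta : minpoly B δ = X ^ p - C b := by
  refine (minpoly.eq_of_irreducible_of_monic H (by simp [hδ])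
    (monic_X_pow_sub_C b hp.ne_zero)).symm

lemma finrank_delta : Module.finrank B (B⟮δ⟯) = p := by
  rw [IntermediateField.adjoin.finrank (int_delta hp hδ H), minpoly_delta hp hδ H,
    natDegree_X_pow_sub_C]

lemma gen_pow_eq : (AdjoinSimple.gen B δ) ^ p = algebraMap B (B⟮δ⟯) b := by
  have h1 : algebraMap (B⟮δ⟯) Ω ((AdjoinSimple.gen B δ) ^ p) = algebraMap (B⟮δ⟯) Ω (algebraMap B (B⟮δ⟯) b) := by
    rw [map_pow, AdjoinSimple.algebraMap_gen, hδ, ← IsScalarTower.algebraMap_apply]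
  exact (algebraMap (B⟮δ⟯) Ω).injective h1

lemma adjoin_gen_top : B⟮AdjoinSimple.gen B δ⟯ = ⊤ := by
  apply IntermediateField.lift_injective
  rw [IntermediateField.lift_adjoin_simple, IntermediateField.lift_top]
  rfl

end Step

section Step2

universe u
variable {B Ω : Type u} [Field B] [Field Ω] [Algebra B Ω]
variable {p : ℕ} (hp : p.Prime) {ω : B} (hω : IsPrimitiveRoot ω p) {b : B} (hb : b ≠ 0)
variable {δ : Ω} (hδ : δ ^ p = algebraMap B Ω b)
variable (H : Irreducible (X ^ p - C b))

set_option linter.unusedSectionVars false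

include hp hω hb hδ H in
lemma key_lemma (β : B⟮δ⟯) (t : B) (ht : t ≠ 0)
    (hβ : β ^ p = algebraMap B (B⟮δ⟯) t) :
    ∃ (u : B) (j : ℕ), 0 < j ∧ j ≤ p ∧ u ^ p = t * b ^ j := by
  haveI : NeZero p := ⟨hp.ne_zero⟩
  have hprim : (primitiveRoots p B).Nonempty := ⟨ω, (mem_primitiveRoots hp.pos).mpr hω⟩
  have hfr : Module.finrank B (B⟮δ⟯) = p := finrank_delta hp hδ H
  haveI : FiniteDimensional B (B⟮δ⟯) :=
    IntermediateField.adjoin.finiteDimensional (int_delta hp hδ H)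
  have hgen : (AdjoinSimple.gen B δ) ^ (Module.finrank B (B⟮δ⟯)) = algebraMap B (B⟮δ⟯) b := by
    rw [hfr]; exact gen_pow_eq hp hδ H
  have hprim' : (primitiveRoots (Module.finrank B (B⟮δ⟯)) B).Nonempty := by
    rw [hfr]; exact hprim
  haveI hsf : IsSplittingField B (B⟮δ⟯) (X ^ p - C b) := by
    have := isSplittingField_X_pow_sub_C_of_root_adjoin_eq_top hprim' hgen (adjoin_gen_top hp hδ H)
    rwa [hfr] at this
  haveI : IsGalois B (B⟮δ⟯) := isGalois_of_isSplittingField_X_pow_sub_C hprim H (B⟮δ⟯)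
  set g : B⟮δ⟯ := AdjoinSimple.gen B δ with hg
  have hgp : g ^ p = algebraMap B (B⟮δ⟯) b := gen_pow_eq hp hδ H
  have hgne : g ≠ 0 := by
    intro h0
    have : algebraMap B (B⟮δ⟯) b = 0 := by rw [← hgp, h0, zero_pow hp.ne_zero]
    exact hb ((_root_.map_eq_zero _).mp this)
  have hβne : β ≠ 0 := by
    intro h0
    have : algebraMap B (B⟮δ⟯) t = 0 := by rw [← hβ, h0, zero_pow hp.ne_zero]
    exact ht ((_root_.map_eq_zero _).mp this)
  -- the distinguished generator of the Galois group
  set E := autEquivZmod H (B⟮δ⟯) hω with hE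
  set σ : B⟮δ⟯ ≃ₐ[B] B⟮δ⟯ := E.symm (Multiplicative.ofAdd (1 : ZMod p)) with hσ
  set w : B⟮δ⟯ := algebraMap B (B⟮δ⟯) ω with hw
  have hσg : σ g = w * g := by
    have h1 := autEquivZmod_symm_apply_natCast H (B⟮δ⟯) hgp hω 1
    rw [pow_one, Nat.cast_one] at h1
    rw [hσ, hE, h1, Algebra.smul_def, hw]
  have hwprim : IsPrimitiveRoot w p := hω.map_of_injective (algebraMap B (B⟮δ⟯)).injective
  have hwp : w ^ p = 1 := by rw [hw, ← map_pow, hω.pow_eq_one, map_one]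
  -- σ β = w^j * β
  have hfix : (σ β) ^ p = β ^ p := by
    rw [← map_pow, hβ, AlgEquiv.commutes]
  have hpow1 : (σ β * β⁻¹) ^ p = 1 := by
    rw [mul_pow, hfix, inv_pow, mul_inv_cancel₀ (pow_ne_zero _ hβne)]
  obtain ⟨j, hjp, hjw⟩ := hwprim.eq_pow_of_pow_eq_one hpow1
  have hσβ : σ β = w ^ j * β := by
    rw [hjw]
    field_simp
  -- the fixed element
  set γ : B⟮δ⟯ := β * g ^ (p - j) with hγ
  have hσγ : σ γ = γ := by
    rw [hγ, map_mul, map_pow, hσβ, hσg, mul_pow]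
    have hjle : j + (p - j) = p := by omega
    calc w ^ j * β * (w ^ (p - j) * g ^ (p - j))
        = (w ^ (j + (p - j))) * (β * g ^ (p - j)) := by rw [pow_add]; ring
      _ = β * g ^ (p - j) := by rw [hjle, hwp, one_mul]
  -- γ is fixed by the whole Galois group
  have hofAdd : ∀ x : ZMod p, Multiplicative.ofAdd x
      = (Multiplicative.ofAdd (1 : ZMod p)) ^ x.val := by
    intro x
    rw [← ofAdd_nsmul]
    congr 1
    rw [nsmul_eq_mul, mul_one]
    exact (ZMod.natCast_rightInverse x).symm
  have hallfix : ∀ τ : B⟮δ⟯ ≃ₐ[B] B⟮δ⟯, τ γ = γ := by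
    intro τ
    have hτ : τ = σ ^ (Multiplicative.toAdd (E τ)).val := by
      apply E.injective
      rw [map_pow, hσ, MulEquiv.apply_symm_apply, ← hofAdd]
      simp
    rw [hτ]
    generalize (Multiplicative.toAdd (E τ)).val = k
    induction k with
    | zero => simp
    | succ k ih => rw [pow_succ, AlgEquiv.mul_apply, hσγ, ih]
  -- hence in the base field
  have hbot : γ ∈ (⊥ : IntermediateField B (B⟮δ⟯)) := by
    have h1 : IntermediateField.fixedField (⊤ : Subgroup (B⟮δ⟯ ≃ₐ[B] B⟮δ⟯)) = ⊥ := by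
      rw [← IntermediateField.fixingSubgroup_bot]
      exact IsGalois.fixedField_fixingSubgroup ⊥
    rw [← h1]
    exact fun ϕ => hallfix ϕ
  rw [IntermediateField.mem_bot] at hbot
  obtain ⟨u, hu⟩ := hbot
  refine ⟨u, p - j, by omega, by omega, ?_⟩
  have h2 : γ ^ p = algebraMap B (B⟮δ⟯) (t * b ^ (p - j)) := by
    rw [hγ, mul_pow, hβ, ← pow_mul, mul_comm (p - j) p, pow_mul, hgp, ← map_pow, ← map_mul]
  rw [← hu, ← map_pow] at h2
  exact (algebraMap B (B⟮δ⟯)).injective h2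

end Step2

section Step3

universe u
variable {B Ω : Type u} [Field B] [Field Ω] [Algebra B Ω]
variable {p : ℕ} (hp : p.Prime) {b : B} (hb : b ≠ 0)
variable {δ : Ω} (hδ : δ ^ p = algebraMap B Ω b)
variable (H : Irreducible (X ^ p - C b))

set_option linter.unusedSectionVars false

include hp hb hδ H in
lemma norm_lemma (β : B⟮δ⟯) (t : B) (ht : t ≠ 0) (f : ℕ) (hf0 : 0 < f) (hfp : f < p)
    (hβ : β ^ p = (AdjoinSimple.gen B δ) ^ f * algebraMap B (B⟮δ⟯) t) :
    (∃ u : B, u ^ p = b) ∨ (p = 2 ∧ ∃ u : B, u ^ 2 = -b) := by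
  haveI : FiniteDimensional B (B⟮δ⟯) :=
    IntermediateField.adjoin.finiteDimensional (int_delta hp hδ H)
  have hfr : Module.finrank B (B⟮δ⟯) = p := finrank_delta hp hδ H
  -- compute norms
  set pb := IntermediateField.adjoin.powerBasis (int_delta hp hδ H) with hpb
  have hpbgen : pb.gen = AdjoinSimple.gen B δ := by rw [hpb, IntermediateField.adjoin.powerBasis_gen]
  have hNg : Algebra.norm B (AdjoinSimple.gen B δ) = (-1) ^ p * (-b) := by
    have h1 := Algebra.PowerBasis.norm_gen_eq_coeff_zero_minpoly pb
    rw [hpbgen, IntermediateField.minpoly_gen, minpoly_delta hp hδ H] at h1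
    have hdim : pb.dim = p := by
      rw [hpb, IntermediateField.adjoin.powerBasis_dim, minpoly_delta hp hδ H,
        natDegree_X_pow_sub_C]
    rw [h1, hdim]
    congr 1
    rw [coeff_sub, coeff_X_pow, coeff_C]
    simp [Ne.symm hp.ne_zero]
  have hNt : Algebra.norm B (algebraMap B (B⟮δ⟯) t) = t ^ p := by
    rw [Algebra.norm_algebraMap, hfr]
  have hNβ : (Algebra.norm B β) ^ p = ((-1) ^ p * (-b)) ^ f * t ^ p := by
    rw [← map_pow, hβ, map_mul, map_pow, hNg, hNt]
  rcases hp.eq_two_or_odd' with hp2 | hodd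
  · -- p = 2, f = 1
    subst hp2
    interval_cases f
    right
    refine ⟨rfl, Algebra.norm B β / t, ?_⟩
    have he : ((-1 : B) ^ 2 * -b) ^ 1 * t ^ 2 = -b * t ^ 2 := by ring
    rw [div_pow, hNβ, he, mul_div_assoc, div_self (pow_ne_zero _ ht), mul_one]
  · -- p odd
    left
    have hNg' : ((-1) ^ p * (-b)) = b := by rw [hodd.neg_one_pow]; ring
    rw [hNg'] at hNβ
    set c := Algebra.norm B β / t with hc0
    have hc : c ^ p = b ^ f := by
      rw [hc0, div_pow, hNβ, mul_div_assoc, div_self (pow_ne_zero _ ht), mul_one]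
    -- choose inverse of f mod p
    haveI : Fact p.Prime := ⟨hp⟩
    haveI : Fact (1 < p) := ⟨hp.one_lt⟩
    set r := ((f : ZMod p)⁻¹).val with hr
    have hfz : (f : ZMod p) ≠ 0 := by
      rw [Ne, ZMod.natCast_eq_zero_iff]
      exact fun hdvd => absurd (Nat.le_of_dvd hf0 hdvd) (not_le.mpr hfp)
    have h1 : ((f * r : ℕ) : ZMod p) = 1 := by
      push_cast
      rw [hr, ZMod.natCast_val, ZMod.cast_id]
      exact mul_inv_cancel₀ hfz
    have h2 : (f * r) % p = 1 := by
      have := congrArg ZMod.val h1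
      rwa [ZMod.val_natCast, ZMod.val_one] at this
    obtain ⟨s, hs⟩ : ∃ s, f * r = p * s + 1 := by
      have h3 := Nat.div_add_mod (f * r) p
      exact ⟨(f * r) / p, by omega⟩
    refine ⟨c ^ r / b ^ s, ?_⟩
    have h3 : (c ^ r) ^ p = b ^ (p * s) * b := by
      rw [← pow_mul, mul_comm r p, pow_mul, hc, ← pow_mul, hs, pow_add, pow_one]
    rw [div_pow, h3, ← pow_mul, mul_comm s p,
      mul_comm (b ^ (p * s)) b, mul_div_assoc, div_self (pow_ne_zero _ hb), mul_one]
end Step3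

section One
universe u

set_option linter.unusedSectionVars false

theorem lemma_one {p : ℕ} (hp : p.Prime) : ∀ (n : ℕ) (B Ω : Type u) [Field B] [Field Ω]
    [Algebra B Ω] (ω : B), IsPrimitiveRoot ω p → ∀ (b : B), b ≠ 0 →
    ∀ (r : ℕ) (T : Fin r → B), (∀ i, T i ≠ 0) →
    (p = 2 → 2 ≤ n → IsSquare (-1 : B)) → ∀ (α : Ω), α ^ p ^ n = algebraMap B Ω b →
    (∀ e : Fin r → ℕ, (∀ i, e i < p) → (∃ i, e i ≠ 0) →
      ∀ u : B, u ^ p ≠ ∏ i, T i ^ e i) →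
    (1 ≤ n → ∀ (f : ℕ) (e : Fin r → ℕ), f < p → (∀ i, e i < p) → (f ≠ 0 ∨ ∃ i, e i ≠ 0) →
      ∀ u : B, u ^ p ≠ b ^ f * ∏ i, T i ^ e i) →
    Module.finrank B (IntermediateField.adjoin B {α}) = p ^ n ∧
    (∀ e : Fin r → ℕ, (∀ i, e i < p) → (∃ i, e i ≠ 0) → ∀ β : Ω,
      β ∈ IntermediateField.adjoin B {α} → β ^ p ≠ algebraMap B Ω (∏ i, T i ^ e i)) := by
  intro n
  induction n with
  | zero =>
    intro B Ω _ _ _ ω hω b hb r T hT hsq α hα He Hf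
    rw [pow_zero, pow_one] at hα
    have habot : IntermediateField.adjoin B {α} = ⊥ := by
      rw [adjoin_simple_eq_bot_iff, IntermediateField.mem_bot]
      exact ⟨b, hα.symm⟩
    constructor
    · rw [habot, IntermediateField.finrank_bot, pow_zero]
    · intro e he hne β hβ hβp
      rw [habot, IntermediateField.mem_bot] at hβ
      obtain ⟨u, rfl⟩ := hβ
      rw [← map_pow] at hβp
      exact He e he hne u ((algebraMap B Ω).injective hβp)
  | succ n IH =>
    intro B Ω _ _ _ ω hω b hb r T hT hsq α hα He Hf
    set δ : Ω := α ^ p ^ n with hδdef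
    have hδ : δ ^ p = algebraMap B Ω b := by
      rw [hδdef, ← pow_mul, ← pow_succ, hα]
    have hbp : ∀ u : B, u ^ p ≠ b := by
      intro u hu
      refine Hf (by omega) 1 0 hp.one_lt (by simp [hp.pos]) (Or.inl one_ne_zero) u ?_
      simpa using hu
    have H : Irreducible (X ^ p - C b) := X_pow_sub_C_irreducible_of_prime hp hbp
    have hδne : δ ≠ 0 := by
      intro h0
      apply hb
      have : algebraMap B Ω b = 0 := by rw [← hδ, h0, zero_pow hp.ne_zero]
      exact (_root_.map_eq_zero _).mp this
    set g := AdjoinSimple.gen B δ with hgdef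
    have hgΩ : algebraMap (B⟮δ⟯) Ω g = δ := AdjoinSimple.algebraMap_gen B δ
    have hgne : g ≠ 0 := by
      intro h0
      apply hδne
      rw [← hgΩ, h0, map_zero]
    have hω' : IsPrimitiveRoot (algebraMap B (B⟮δ⟯) ω) p :=
      hω.map_of_injective (algebraMap B (B⟮δ⟯)).injective
    set T' : Fin r → B⟮δ⟯ := fun i => algebraMap B (B⟮δ⟯) (T i) with hT'def
    have hT' : ∀ i, T' i ≠ 0 := fun i h0 => hT i ((_root_.map_eq_zero _).mp h0)
    have hTprod : ∀ e : Fin r → ℕ,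
        (∏ i, T' i ^ e i) = algebraMap B (B⟮δ⟯) (∏ i, T i ^ e i) := by
      intro e
      rw [map_prod]
      exact Finset.prod_congr rfl fun i _ => by rw [hT'def, map_pow]
    have hTΩ : ∀ e : Fin r → ℕ,
        algebraMap (B⟮δ⟯) Ω (∏ i, T' i ^ e i) = algebraMap B Ω (∏ i, T i ^ e i) := by
      intro e
      rw [hTprod, ← IsScalarTower.algebraMap_apply]
    have hsq' : IsSquare (-1 : B) → IsSquare (-1 : (B⟮δ⟯)) := by
      rintro ⟨u, hu⟩
      exact ⟨algebraMap B (B⟮δ⟯) u, by rw [← map_mul, ← hu, map_neg, map_one]⟩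
    have htne : ∀ e : Fin r → ℕ, (∏ i, T i ^ e i) ≠ 0 :=
      fun e => Finset.prod_ne_zero_iff.mpr fun i _ => pow_ne_zero _ (hT i)
    -- the new independence hypotheses over B⟮δ⟯
    have He' : ∀ e : Fin r → ℕ, (∀ i, e i < p) → (∃ i, e i ≠ 0) →
        ∀ u : (B⟮δ⟯), u ^ p ≠ ∏ i, T' i ^ e i := by
      intro e he hne u hu
      rw [hTprod] at hu
      obtain ⟨v, j, hj0, hjp, hv⟩ := key_lemma hp hω hb hδ H u _ (htne e) hu
      rcases eq_or_lt_of_le hjp with hjeq | hjlt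
      · subst hjeq
        refine He e he hne (v / b) ?_
        rw [div_pow, hv, mul_div_assoc, div_self (pow_ne_zero _ hb), mul_one]
      · exact Hf (by omega) j e hjlt he (Or.inl (Nat.pos_iff_ne_zero.mp hj0)) v (by rw [hv, mul_comm])
    have Hf' : 1 ≤ n → ∀ (f : ℕ) (e : Fin r → ℕ), f < p → (∀ i, e i < p) →
        (f ≠ 0 ∨ ∃ i, e i ≠ 0) →
        ∀ u : (B⟮δ⟯), u ^ p ≠ g ^ f * ∏ i, T' i ^ e i := by
      intro hn1 f e hf he hne u hu
      rcases Nat.eq_zero_or_pos f with hf0 | hf0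
      · subst hf0
        rw [pow_zero, one_mul] at hu
        exact He' e he (hne.resolve_left (by simp)) u hu
      · rw [hTprod] at hu
        rcases norm_lemma hp hb hδ H u _ (htne e) f hf0 hf hu with ⟨v, hv⟩ | ⟨hp2, v, hv⟩
        · exact hbp v hv
        · have h2n : 2 ≤ n + 1 := by omega
          
          obtain ⟨i0, hi0⟩ := hsq hp2 h2n
          apply hbp (i0 * v)
          rw [hp2, mul_pow, hv]
          rw [show i0 ^ 2 = i0 * i0 by ring, ← hi0]
          ring
    -- recursive call
    have hα' : α ^ p ^ n = algebraMap (B⟮δ⟯) Ω g := by rw [hgΩ, hδdef]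
    obtain ⟨hfin', Hcons'⟩ := IH (B⟮δ⟯) Ω (algebraMap B (B⟮δ⟯) ω) hω' g hgne r T' hT'
      (fun hp2 h2n => hsq' (hsq hp2 (by omega))) α hα' He' Hf'
    -- identify the two adjoins
    have hEq : (IntermediateField.adjoin (B⟮δ⟯) {α}).restrictScalars B
        = IntermediateField.adjoin B {α} := by
      rw [IntermediateField.adjoin_adjoin_left]
      apply le_antisymm
      · rw [IntermediateField.adjoin_le_iff]
        intro x hx
        rcases hx with h1 | h2
        · rw [Set.mem_singleton_iff] at h1
          rw [h1]
          exact pow_mem (IntermediateField.mem_adjoin_simple_self B α) _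
        · rw [Set.mem_singleton_iff] at h2
          rw [h2]
          exact IntermediateField.mem_adjoin_simple_self B α
      · exact IntermediateField.adjoin.mono _ _ _ Set.subset_union_right
    constructor
    · have hmul : Module.finrank B (B⟮δ⟯)
          * Module.finrank (B⟮δ⟯) (IntermediateField.adjoin (B⟮δ⟯) {α})
          = Module.finrank B (IntermediateField.adjoin B {α}) := by
        rw [← hEq]
        exact Module.finrank_mul_finrank B (B⟮δ⟯) (IntermediateField.adjoin (B⟮δ⟯) {α})
      rw [← hmul, hfin', finrank_delta hp hδ H, pow_succ, mul_comm]
    · intro e he hne β hβmem hβeq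
      rw [← hEq] at hβmem
      refine Hcons' e he hne β hβmem ?_
      rw [hTΩ e]
      exact hβeq
end One

section All
universe u

set_option linter.unusedSectionVars false

theorem lemma_all {p : ℕ} (hp : p.Prime) : ∀ (ℓ : ℕ) (B Ω : Type u) [Field B] [Field Ω]
    [Algebra B Ω] (ω : B), IsPrimitiveRoot ω p → ∀ (N : Fin ℓ → B), (∀ i, N i ≠ 0) →
    ∀ (n : Fin ℓ → ℕ), (∀ i, p = 2 → 2 ≤ n i → IsSquare (-1 : B)) →
    ∀ (α : Fin ℓ → Ω), (∀ i, α i ^ p ^ n i = algebraMap B Ω (N i)) →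
    (∀ e : Fin ℓ → ℕ, (∀ i, e i < p) → (∃ i, e i ≠ 0) →
      ∀ u : B, u ^ p ≠ ∏ i, N i ^ e i) →
    Module.finrank B (IntermediateField.adjoin B (Set.range α)) = ∏ i, p ^ n i := by
  intro ℓ
  induction ℓ with
  | zero =>
    intro B Ω _ _ _ ω hω N hN n hsq α hα hInd
    rw [Set.range_eq_empty α, IntermediateField.adjoin_empty, IntermediateField.finrank_bot,
      Finset.prod_of_isEmpty]
  | succ ℓ IH =>
    intro B Ω _ _ _ ω hω N hN n hsq α hα hInd
    -- apply the single-chain lemma to α 0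
    have He0 : ∀ e : Fin ℓ → ℕ, (∀ i, e i < p) → (∃ i, e i ≠ 0) →
        ∀ u : B, u ^ p ≠ ∏ i, N i.succ ^ e i := by
      intro e he hne u hu
      refine hInd (Fin.cons 0 e) ?_ ?_ u ?_
      · intro i
        refine Fin.cases ?_ ?_ i
        · simpa using hp.pos
        · intro j; simpa using he j
      · obtain ⟨i, hi⟩ := hne
        exact ⟨i.succ, by simpa using hi⟩
      · rw [Fin.prod_univ_succ]
        simpa using hu
    have Hf0 : 1 ≤ n 0 → ∀ (f : ℕ) (e : Fin ℓ → ℕ), f < p → (∀ i, e i < p) →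
        (f ≠ 0 ∨ ∃ i, e i ≠ 0) →
        ∀ u : B, u ^ p ≠ N 0 ^ f * ∏ i, N i.succ ^ e i := by
      intro _ f e hf he hne u hu
      refine hInd (Fin.cons f e) ?_ ?_ u ?_
      · intro i
        refine Fin.cases ?_ ?_ i
        · simpa using hf
        · intro j; simpa using he j
      · rcases hne with hf0 | ⟨i, hi⟩
        · exact ⟨0, by simpa using hf0⟩
        · exact ⟨i.succ, by simpa using hi⟩
      · rw [Fin.prod_univ_succ]
        simpa using hu
    obtain ⟨hfin0, Hcons0⟩ := lemma_one hp (n 0) B Ω ω hω (N 0) (hN 0) ℓ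
      (fun i => N i.succ) (fun i => hN i.succ) (hsq 0) (α 0) (hα 0) He0 Hf0
    -- now the tail over B' := B⟮α 0⟯
    set B' := IntermediateField.adjoin B {α 0} with hB'
    have hω' : IsPrimitiveRoot (algebraMap B B' ω) p :=
      hω.map_of_injective (algebraMap B B').injective
    set N' : Fin ℓ → B' := fun i => algebraMap B B' (N i.succ) with hN'def
    have hN' : ∀ i, N' i ≠ 0 := fun i h0 => hN i.succ ((_root_.map_eq_zero _).mp h0)
    have hsq' : ∀ i : Fin ℓ, p = 2 → 2 ≤ n i.succ → IsSquare (-1 : B') := by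
      intro i hp2 h2n
      obtain ⟨v, hv⟩ := hsq i.succ hp2 h2n
      exact ⟨algebraMap B B' v, by rw [← map_mul, ← hv, map_neg, map_one]⟩
    have htail : ∀ i : Fin ℓ, Fin.tail α i = α i.succ := fun i => rfl
    have hα' : ∀ i : Fin ℓ, (Fin.tail α) i ^ p ^ (Fin.tail n i) = algebraMap B' Ω (N' i) := by
      intro i
      rw [htail, hN'def, ← IsScalarTower.algebraMap_apply]
      exact hα i.succ
    have hInd' : ∀ e : Fin ℓ → ℕ, (∀ i, e i < p) → (∃ i, e i ≠ 0) →
        ∀ u : B', u ^ p ≠ ∏ i, N' i ^ e i := by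
      intro e he hne u hu
      have h1 : (∏ i, N' i ^ e i) = algebraMap B B' (∏ i, N i.succ ^ e i) := by
        rw [map_prod]
        exact Finset.prod_congr rfl fun i _ => (map_pow _ _ _).symm
      have hcoe : (algebraMap B' Ω u) ^ p = algebraMap B Ω (∏ i, N i.succ ^ e i) := by
        rw [← map_pow, hu, h1, ← IsScalarTower.algebraMap_apply]
      exact Hcons0 e he hne (algebraMap B' Ω u) u.2 hcoe
    have hfin' := IH B' Ω (algebraMap B B' ω) hω' N' hN' (Fin.tail n) hsq'
      (Fin.tail α) hα' hInd'
    -- stitch the tower together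
    have hEq : (IntermediateField.adjoin B' (Set.range (Fin.tail α))).restrictScalars B
        = IntermediateField.adjoin B (Set.range α) := by
      rw [hB', IntermediateField.adjoin_adjoin_left]
      congr 1
      rw [Set.singleton_union, ← Fin.cons_self_tail α, Fin.range_cons]
      simp [Fin.tail]
    have hmul : Module.finrank B B'
        * Module.finrank B' (IntermediateField.adjoin B' (Set.range (Fin.tail α)))
        = Module.finrank B (IntermediateField.adjoin B (Set.range α)) := by
      rw [← hEq]
      exact Module.finrank_mul_finrank B B' (IntermediateField.adjoin B' (Set.range (Fin.tail α)))
    rw [← hmul, hfin', hfin0, Fin.prod_univ_succ]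
    rfl
end All

theorem lemma7_aux
    {D F Ω : Type*} [CommRing D] [IsDomain D]
    [Field F] [Field Ω] [Algebra D F] [Algebra F Ω] [IsFractionRing D F]
    {ℓ : ℕ} (hℓ : 1 ≤ ℓ) (N : Fin ℓ → D) (hN : ∀ i, N i ≠ 0)
    (p : ℕ) (hp : p.Prime)
    (n : Fin ℓ → ℕ) (hn : ∀ i, 1 ≤ n i) (m : Fin ℓ → ℕ) (hm : ∀ i, m i = p ^ n i)
    (ζ : Ω) (hζ : IsPrimitiveRoot ζ (Finset.univ.lcm m))
    (h : ¬ ∃ x ∈ Sset N p,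
      ∃ κ ∈ IntermediateField.adjoin F ({ζ} : Set Ω),
        κ ^ p = algebraMap F Ω (algebraMap D F x))
    (α : Fin ℓ → Ω)
    (hα : ∀ i, α i ^ m i = algebraMap F Ω (algebraMap D F (N i))) :
    Module.finrank (IntermediateField.adjoin F ({ζ} : Set Ω))
      (IntermediateField.adjoin
        (IntermediateField.adjoin F ({ζ} : Set Ω))
        (Set.range α)) = ∏ i, m i := by
  classical
  set K := IntermediateField.adjoin F ({ζ} : Set Ω) with hK
  set M := Finset.univ.lcm m with hM
  -- basic facts about M
  have hm0 : ∀ i, m i ≠ 0 := fun i => by rw [hm i]; exact pow_ne_zero _ hp.ne_zero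
  have hM0 : 0 < M := by
    rcases Nat.eq_zero_or_pos M with h0 | h0
    · exfalso
      rw [hM] at h0
      rw [Finset.lcm_eq_zero_iff] at h0
      obtain ⟨i, _, hi⟩ := h0
      exact hm0 i hi
    · exact h0
  have hdvdM : ∀ i, p ^ n i ∣ M := by
    intro i
    rw [← hm i, hM]
    exact Finset.dvd_lcm (Finset.mem_univ i)
  have i0 : Fin ℓ := ⟨0, hℓ⟩
  have hpM : p ∣ M := dvd_trans (dvd_pow_self p (by have := hn i0; omega)) (hdvdM i0)
  -- ζ as an element of K
  have hζK : ζ ∈ K := IntermediateField.subset_adjoin F _ rfl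
  set ζK : K := ⟨ζ, hζK⟩ with hζKdef
  have hζKmap : algebraMap K Ω ζK = ζ := rfl
  have hζKprim : IsPrimitiveRoot ζK M := by
    apply IsPrimitiveRoot.of_map_of_injective (f := algebraMap K Ω)
    · rw [hζKmap]; exact hζ
    · exact (algebraMap K Ω).injective
  -- primitive p-th root of unity in K
  have hωprim : IsPrimitiveRoot (ζK ^ (M / p)) p :=
    hζKprim.pow hM0 (by rw [Nat.div_mul_cancel hpM])
  -- square root of -1 in K when needed
  have hsq : ∀ i, p = 2 → 2 ≤ n i → IsSquare (-1 : K) := by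
    intro i hp2 h2n
    have h4 : 4 ∣ M := by
      refine dvd_trans ?_ (hdvdM i)
      have : (4 : ℕ) = 2 ^ 2 := by norm_num
      rw [this, hp2]
      exact pow_dvd_pow 2 h2n
    have h4prim : IsPrimitiveRoot (ζK ^ (M / 4)) 4 :=
      hζKprim.pow hM0 (by rw [Nat.div_mul_cancel h4])
    have h2prim : IsPrimitiveRoot ((ζK ^ (M / 4)) ^ 2) 2 :=
      h4prim.pow (by norm_num) (by norm_num)
    have hneg : ((ζK ^ (M / 4)) ^ 2) = -1 := h2prim.eq_neg_one_of_two_right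
    exact ⟨ζK ^ (M / 4), by rw [← hneg]; ring⟩
  -- the N i as elements of K
  have hinjD : Function.Injective (algebraMap D F) := IsFractionRing.injective D F
  have hNmem : ∀ i, algebraMap F Ω (algebraMap D F (N i)) ∈ K :=
    fun i => IntermediateField.algebraMap_mem K _
  set N' : Fin ℓ → K := fun i => ⟨algebraMap F Ω (algebraMap D F (N i)), hNmem i⟩ with hN'def
  have hN'ne : ∀ i, N' i ≠ 0 := by
    intro i h0
    apply hN i
    have h1 : algebraMap F Ω (algebraMap D F (N i)) = 0 := congrArg Subtype.val h0
    have h2 : algebraMap D F (N i) = 0 := (_root_.map_eq_zero _).mp h1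
    exact hinjD (by rw [h2, map_zero])
  have hN'map : ∀ i, algebraMap K Ω (N' i) = algebraMap F Ω (algebraMap D F (N i)) :=
    fun i => rfl
  -- roots
  have hα' : ∀ i, α i ^ p ^ n i = algebraMap K Ω (N' i) := by
    intro i
    rw [hN'map, ← hm i]
    exact hα i
  -- independence from the hypothesis h
  have hInd : ∀ e : Fin ℓ → ℕ, (∀ i, e i < p) → (∃ i, e i ≠ 0) →
      ∀ u : K, u ^ p ≠ ∏ i, N' i ^ e i := by
    intro e he hne u hu
    apply h
    -- the largest index with nonzero exponent
    have hsne : (Finset.univ.filter (fun i => e i ≠ 0)).Nonempty := by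
      obtain ⟨i, hi⟩ := hne
      exact ⟨i, by simp [hi]⟩
    set t := (Finset.univ.filter (fun i => e i ≠ 0)).max' hsne with ht
    have het : e t ≠ 0 := by
      have := (Finset.univ.filter (fun i => e i ≠ 0)).max'_mem hsne
      rw [← ht] at this
      exact (Finset.mem_filter.mp this).2
    have htmax : ∀ j, t < j → e j = 0 := by
      intro j hj
      by_contra hje
      have hjmem : j ∈ Finset.univ.filter (fun i => e i ≠ 0) := by simp [hje]
      have := Finset.le_max' _ j hjmem
      rw [← ht] at this
      exact absurd (lt_of_lt_of_le hj this) (lt_irrefl _)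
    -- inverse of e t mod p
    haveI : Fact p.Prime := ⟨hp⟩
    haveI : Fact (1 < p) := ⟨hp.one_lt⟩
    set r := ((e t : ZMod p))⁻¹.val with hr
    have hfz : ((e t : ℕ) : ZMod p) ≠ 0 := by
      rw [Ne, ZMod.natCast_eq_zero_iff]
      intro hdvd
      have := Nat.le_of_dvd (Nat.pos_of_ne_zero het) hdvd
      exact absurd this (not_le.mpr (he t))
    have h1 : ((e t * r : ℕ) : ZMod p) = 1 := by
      push_cast
      rw [hr, ZMod.natCast_val, ZMod.cast_id]
      exact mul_inv_cancel₀ hfz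
    have h2 : (e t * r) % p = 1 := by
      have := congrArg ZMod.val h1
      rwa [ZMod.val_natCast, ZMod.val_one] at this
    set s : Fin ℓ → ℕ := fun i => (r * e i) % p with hs
    set q : Fin ℓ → ℕ := fun i => (r * e i) / p with hq
    have hsq2 : ∀ i, r * e i = p * q i + s i := fun i => (Nat.div_add_mod (r * e i) p).symm
    refine ⟨∏ j, N j ^ s j, ⟨t, s, fun j => Nat.mod_lt _ hp.pos, ?_, ?_, rfl⟩, ?_⟩
    · show (r * e t) % p = 1
      rw [mul_comm]
      exact h2
    · intro j hj
      show (r * e j) % p = 0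
      rw [htmax j hj, Nat.mul_zero, Nat.zero_mod]
    · set Q : K := ∏ i, N' i ^ q i with hQ
      have hQne : Q ≠ 0 := by
        rw [hQ]
        exact Finset.prod_ne_zero_iff.mpr fun i _ => pow_ne_zero _ (hN'ne i)
      set κ : K := u ^ r / Q with hκ
      refine ⟨algebraMap K Ω κ, κ.2, ?_⟩
      have hkey : κ ^ p = ∏ i, N' i ^ s i := by
        rw [hκ, div_pow, ← pow_mul]
        have h3 : u ^ (r * p) = (∏ i, N' i ^ e i) ^ r := by rw [mul_comm r p, pow_mul, hu]
        rw [h3, ← Finset.prod_pow]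
        have h4 : ∀ i ∈ Finset.univ, (N' i ^ e i) ^ r = N' i ^ (p * q i) * N' i ^ s i := by
          intro i _
          rw [← pow_mul, ← pow_add, mul_comm (e i) r, hsq2 i]
        rw [Finset.prod_congr rfl h4, Finset.prod_mul_distrib]
        have h5 : (∏ i, N' i ^ (p * q i)) = Q ^ p := by
          rw [hQ, ← Finset.prod_pow]
          exact Finset.prod_congr rfl fun i _ => by rw [← pow_mul, mul_comm p (q i)]
        rw [h5, mul_comm, mul_div_assoc, div_self (pow_ne_zero _ hQne), mul_one]
      have hcoe : algebraMap K Ω (∏ i, N' i ^ s i)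
          = algebraMap F Ω (algebraMap D F (∏ j, N j ^ s j)) := by
        rw [map_prod, map_prod, map_prod]
        refine Finset.prod_congr rfl fun i _ => ?_
        rw [map_pow, map_pow, map_pow, hN'map]
      rw [← hcoe, ← map_pow, hkey]
  have hmain := lemma_all hp ℓ K Ω (ζK ^ (M / p)) hωprim N' hN'ne n hsq α hα' hInd
  rw [hmain]
  exact Finset.prod_congr rfl fun i _ => (hm i).symm

theorem lemma7
    {D F : Type*} [CommRing D] [IsDomain D] [UniqueFactorizationMonoid D]
    [Field F] [Algebra D F] [IsFractionRing D F]
    {ℓ : ℕ} (hℓ : 1 ≤ ℓ) (N : Fin ℓ → D) (hN : ∀ i, N i ≠ 0)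
    (p : ℕ) (hp : p.Prime) (hchar : ringChar F ≠ p)
    (n : Fin ℓ → ℕ) (hn : ∀ i, 1 ≤ n i) (m : Fin ℓ → ℕ) (hm : ∀ i, m i = p ^ n i)
    (ζ : AlgebraicClosure F) (hζ : IsPrimitiveRoot ζ (Finset.univ.lcm m))
    (h : ¬ ∃ x ∈ Sset N p,
      ∃ κ ∈ IntermediateField.adjoin F ({ζ} : Set (AlgebraicClosure F)),
        κ ^ p = algebraMap F (AlgebraicClosure F) (algebraMap D F x))
    (α : Fin ℓ → AlgebraicClosure F)
    (hα : ∀ i, α i ^ m i = algebraMap F (AlgebraicClosure F) (algebraMap D F (N i))) :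
    Module.finrank (IntermediateField.adjoin F ({ζ} : Set (AlgebraicClosure F)))
      (IntermediateField.adjoin
        (IntermediateField.adjoin F ({ζ} : Set (AlgebraicClosure F)))
        (Set.range α)) = ∏ i, m i :=
  lemma7_aux hℓ N hN p hp n hn m hm ζ hζ h α hα
end

section
/- Let D be a unique factorization domain with field of fractions F of characteristic ≠ 2, let ℓ ≥ 1, let N_1,…,N_ℓ be nonzero elements of D, and let m_i = 2^{n_i} with n_i ≥ 1 for each i. Let m = lcm(m_1,…,m_ℓ), ζ a primitive m-th root of unity in an algebraic closure of F, and K = F(ζ). Assume no element of S_2 is a square in D and that exactly one element M of S_2 is a square in K; write M = N_1^{f_1}⋯N_ℓ^{f_ℓ} with f_i ∈ {0,1} and assume M^♯ = {i : f_i = 1} is nonempty. If 4 divides m and no element of S_2 lies in −D², then for every i ∈ M^♯ no root of X² + N_i lies in F(V_i) (where V_i is the set of chosen roots α_j of X^{m_j} − N_j for j ≠ i), and consequently [F(α_1,…,α_ℓ) : F] = m_1⋯m_ℓ for every choice of roots α_i of X^{m_i} − N_i in the algebraic closure. -/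
open IntermediateField Module

section Quad

variable {F Ω : Type*} [Field F] [Field Ω] [Algebra F Ω]

/-- The quadratic extension `E(β)` as an explicit intermediate field, when `β^2 ∈ E`, `β ∉ E`. -/
noncomputable def quadField (E : IntermediateField F Ω) (β : Ω) (hβ2 : β * β ∈ E)
    (hβ : β ∉ E) : IntermediateField F Ω :=
  Subalgebra.toIntermediateField
  { carrier := {y | ∃ u ∈ E, ∃ v ∈ E, y = u + v * β}
    mul_mem' := by
      rintro x y ⟨u, hu, v, hv, rfl⟩ ⟨u', hu', v', hv', rfl⟩
      exact ⟨u * u' + v * v' * (β * β),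
        add_mem (mul_mem hu hu') (mul_mem (mul_mem hv hv') hβ2),
        u * v' + v * u', add_mem (mul_mem hu hv') (mul_mem hv hu'), by ring⟩
    one_mem' := ⟨1, one_mem E, 0, zero_mem E, by ring⟩
    add_mem' := by
      rintro x y ⟨u, hu, v, hv, rfl⟩ ⟨u', hu', v', hv', rfl⟩
      exact ⟨u + u', add_mem hu hu', v + v', add_mem hv hv', by ring⟩
    zero_mem' := ⟨0, zero_mem E, 0, zero_mem E, by ring⟩
    algebraMap_mem' := fun x => ⟨algebraMap F Ω x, E.algebraMap_mem x, 0, zero_mem E, by ring⟩ }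
  (by
    rintro x ⟨u, hu, v, hv, rfl⟩
    by_cases hx : u + v * β = 0
    · exact ⟨0, zero_mem E, 0, zero_mem E, by simp [hx]⟩
    have hd : u * u - v * v * (β * β) ≠ 0 := by
      intro h0
      have h1 : (u - v * β) * (u + v * β) = 0 := by linear_combination h0
      have h2 : u = v * β := by
        rcases mul_eq_zero.1 h1 with h | h
        · linear_combination h
        · exact absurd h hx
      have hv0 : v ≠ 0 := by rintro rfl; apply hx; simp [h2]
      apply hβ
      have : β = u * v⁻¹ := by rw [h2, mul_comm v β, mul_assoc, mul_inv_cancel₀ hv0, mul_one]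
      rw [this]
      exact mul_mem hu (inv_mem hv)
    set d := u * u - v * v * (β * β) with hdd
    have hdE : d ∈ E := sub_mem (mul_mem hu hu) (mul_mem (mul_mem hv hv) hβ2)
    refine ⟨u / d, div_mem hu hdE, -v / d, div_mem (neg_mem hv) hdE, ?_⟩
    have hmul : (u + v * β) * (u / d + -v / d * β) = 1 := by
      field_simp
      ring
    exact inv_eq_of_mul_eq_one_right hmul)

variable {E : IntermediateField F Ω} {β : Ω}

theorem mem_quadField (hβ2 : β * β ∈ E) (hβ : β ∉ E) {y : Ω} :
    y ∈ quadField E β hβ2 hβ ↔ ∃ u ∈ E, ∃ v ∈ E, y = u + v * β := Iff.rfl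

theorem quadField_eq_sup (hβ2 : β * β ∈ E) (hβ : β ∉ E) :
    E ⊔ F⟮β⟯ = quadField E β hβ2 hβ := by
  apply le_antisymm
  · apply sup_le
    · intro x hx
      exact ⟨x, hx, 0, zero_mem E, by ring⟩
    · rw [adjoin_le_iff]
      rintro x rfl
      exact ⟨0, zero_mem E, 1, one_mem E, by ring⟩
  · rintro y ⟨u, hu, v, hv, rfl⟩
    have h1 : u ∈ E ⊔ F⟮β⟯ := (le_sup_left : E ≤ E ⊔ F⟮β⟯) hu
    have h2 : v ∈ E ⊔ F⟮β⟯ := (le_sup_left : E ≤ E ⊔ F⟮β⟯) hv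
    have h3 : β ∈ E ⊔ F⟮β⟯ :=
      (le_sup_right : F⟮β⟯ ≤ E ⊔ F⟮β⟯) (mem_adjoin_simple_self F β)
    exact add_mem h1 (mul_mem h2 h3)

theorem quad_coords (hβ : β ∉ E) {u v u' v' : Ω} (hu : u ∈ E) (hv : v ∈ E)
    (hu' : u' ∈ E) (hv' : v' ∈ E) (h : u + v * β = u' + v' * β) : u = u' ∧ v = v' := by
  by_cases hvv : v = v'
  · subst hvv
    exact ⟨by linear_combination h, rfl⟩
  · exfalso
    apply hβ
    have hne : v' - v ≠ 0 := fun h0 => hvv (by linear_combination -h0)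
    have : β = (u - u') / (v' - v) := by
      field_simp
      linear_combination -h
    rw [this]
    exact div_mem (sub_mem hu hu') (sub_mem hv' hv)

set_option maxHeartbeats 2000000 in
noncomputable def quadEquiv (hβ2 : β * β ∈ E) (hβ : β ∉ E) :
    (E × E) ≃ₗ[F] quadField E β hβ2 hβ := by
  refine LinearEquiv.ofBijective
    { toFun := fun p => ⟨(p.1 : Ω) + (p.2 : Ω) * β, ⟨p.1, p.1.2, p.2, p.2.2, rfl⟩⟩
      map_add' := by
        rintro ⟨u, v⟩ ⟨u', v'⟩
        apply Subtype.ext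
        show ((u + u' : E) : Ω) + ((v + v' : E) : Ω) * β = (↑u + ↑v * β) + (↑u' + ↑v' * β)
        push_cast
        ring
      map_smul' := by
        rintro c ⟨u, v⟩
        apply Subtype.ext
        show ((c • u : E) : Ω) + ((c • v : E) : Ω) * β = c • (↑u + ↑v * β)
        rw [IntermediateField.coe_smul, IntermediateField.coe_smul, smul_add, smul_mul_assoc]
        } ⟨?_, ?_⟩
  · rintro ⟨u, v⟩ ⟨u', v'⟩ h
    have h' : (u : Ω) + (v : Ω) * β = (u' : Ω) + (v' : Ω) * β := congrArg Subtype.val h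
    obtain ⟨h1, h2⟩ := quad_coords hβ u.2 v.2 u'.2 v'.2 h'
    exact Prod.ext (Subtype.ext h1) (Subtype.ext h2)
  · rintro ⟨y, u, hu, v, hv, rfl⟩
    exact ⟨(⟨u, hu⟩, ⟨v, hv⟩), rfl⟩

theorem quad_finiteDimensional [FiniteDimensional F E] (hβ2 : β * β ∈ E) (hβ : β ∉ E) :
    FiniteDimensional F (quadField E β hβ2 hβ) :=
  LinearEquiv.finiteDimensional (quadEquiv hβ2 hβ)

theorem quad_finrank [FiniteDimensional F E] (hβ2 : β * β ∈ E) (hβ : β ∉ E) :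
    finrank F (quadField E β hβ2 hβ) = 2 * finrank F E := by
  rw [← (quadEquiv hβ2 hβ).finrank_eq, Module.finrank_prod, two_mul]


theorem lemmaB (h2 : (2 : Ω) ≠ 0) (n : ℕ) (hn : 1 ≤ n) :
    ∀ (E : IntermediateField F Ω) (a α : Ω), FiniteDimensional F ↥E → a ∈ E →
    α ^ (2 ^ n) = a → (∀ u ∈ E, u ^ 2 ≠ a) → (∀ u ∈ E, u ^ 2 ≠ -a) →
    (FiniteDimensional F ↥(E ⊔ F⟮α⟯) ∧ finrank F ↥(E ⊔ F⟮α⟯) = 2 ^ n * finrank F ↥E ∧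
      ∀ x ∈ E, (∃ y ∈ E ⊔ F⟮α⟯, y ^ 2 = x) →
        (∃ u ∈ E, u ^ 2 = x) ∨ (∃ u ∈ E, u ^ 2 = x * a)) := by
  have twomem : ∀ (E : IntermediateField F Ω), (2 : Ω) ∈ E := by
    intro E
    rw [show (2 : Ω) = 1 + 1 by norm_num]
    exact add_mem (one_mem E) (one_mem E)
  induction n, hn using Nat.le_induction with
  | base =>
    intro E a α hFD haE hα hna hna'
    haveI := hFD
    have hsq : α ^ 2 = a := by simpa using hα
    have hβ2 : α * α ∈ E := by rw [← sq, hsq]; exact haE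
    have hβ : α ∉ E := fun h => hna α h hsq
    have hsup := quadField_eq_sup hβ2 hβ
    have key : ∀ u v : Ω, (u + v * α) ^ 2 = (u ^ 2 + v ^ 2 * a) + (2 * u * v) * α := by
      intro u v; linear_combination v ^ 2 * hsq
    refine ⟨hsup ▸ quad_finiteDimensional hβ2 hβ, hsup ▸ (by rw [quad_finrank hβ2 hβ]; ring), ?_⟩
    rintro x hxE ⟨y, hy, hyx⟩
    rw [hsup] at hy
    obtain ⟨u, hu, v, hv, rfl⟩ := hy
    rw [key] at hyx
    have hco := quad_coords hβ
      (add_mem (pow_mem hu 2) (mul_mem (pow_mem hv 2) haE))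
      (mul_mem (mul_mem (twomem E) hu) hv) hxE (zero_mem E)
      (by rw [hyx]; ring)
    have huv : u * v = 0 := by
      have := hco.2
      rcases mul_eq_zero.1 (show (2 : Ω) * (u * v) = 0 by linear_combination this) with h | h
      · exact absurd h h2
      · exact h
    rcases mul_eq_zero.1 huv with h | h
    · subst h
      right
      exact ⟨v * a, mul_mem hv haE, by linear_combination a * hco.1⟩
    · subst h
      left
      exact ⟨u, hu, by linear_combination hco.1⟩
  | succ n hn IH =>
    intro E a α hFD haE hα hna hna'
    haveI := hFD
    set δ := α ^ 2 ^ n with hδdef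
    have hδsq : δ ^ 2 = a := by
      rw [hδdef, ← pow_mul, ← pow_succ]
      exact hα
    have hδ2 : δ * δ ∈ E := by rw [← sq, hδsq]; exact haE
    have hδ : δ ∉ E := fun h => hna δ h hδsq
    set E1 := quadField E δ hδ2 hδ with hE1def
    have hsup1 : E ⊔ F⟮δ⟯ = E1 := quadField_eq_sup hδ2 hδ
    haveI hFD1 : FiniteDimensional F ↥E1 := quad_finiteDimensional hδ2 hδ
    have hEle : E ≤ E1 := hsup1 ▸ le_sup_left
    have hδE1 : δ ∈ E1 := ⟨0, zero_mem E, 1, one_mem E, by ring⟩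
    have key : ∀ u v : Ω, (u + v * δ) ^ 2 = (u ^ 2 + v ^ 2 * a) + (2 * u * v) * δ := by
      intro u v; linear_combination v ^ 2 * hδsq
    -- coordinates of an element of E1 whose square lies in `E + E•δ`
    have main : ∀ w ∈ E1, ∀ s t, s ∈ E → t ∈ E → w ^ 2 = s + t * δ →
        ∃ u ∈ E, ∃ v ∈ E, u ^ 2 + v ^ 2 * a = s ∧ 2 * u * v = t := by
      rintro w ⟨u, hu, v, hv, rfl⟩ s t hs ht hw
      rw [key] at hw
      have hco := quad_coords hδ
        (add_mem (pow_mem hu 2) (mul_mem (pow_mem hv 2) haE))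
        (mul_mem (mul_mem (twomem E) hu) hv) hs ht hw
      exact ⟨u, hu, v, hv, hco.1, hco.2⟩
    have hh1 : ∀ u ∈ E1, u ^ 2 ≠ δ := by
      intro w hw hwδ
      obtain ⟨u, hu, v, hv, h1, h2'⟩ := main w hw 0 1 (zero_mem E) (one_mem E) (by rw [hwδ]; ring)
      have hu0 : u ≠ 0 := by rintro rfl; norm_num at h2'
      have hv0 : v ≠ 0 := by rintro rfl; norm_num at h2'
      exact hna' (u * v⁻¹) (mul_mem hu (inv_mem hv)) (by field_simp; linear_combination h1)
    have hh2 : ∀ u ∈ E1, u ^ 2 ≠ -δ := by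
      intro w hw hwδ
      obtain ⟨u, hu, v, hv, h1, h2'⟩ := main w hw 0 (-1) (zero_mem E) (neg_mem (one_mem E))
        (by rw [hwδ]; ring)
      have hu0 : u ≠ 0 := by rintro rfl; norm_num at h2'
      have hv0 : v ≠ 0 := by rintro rfl; norm_num at h2'
      exact hna' (u * v⁻¹) (mul_mem hu (inv_mem hv)) (by field_simp; linear_combination h1)
    obtain ⟨hFD2, hrank2, hchar2⟩ := IH E1 δ α hFD1 hδE1 rfl hh1 hh2
    have hδadj : F⟮δ⟯ ≤ F⟮α⟯ := by
      rw [adjoin_le_iff]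
      rintro x rfl
      exact pow_mem (mem_adjoin_simple_self F α) (2 ^ n)
    have hsup2 : E ⊔ F⟮α⟯ = E1 ⊔ F⟮α⟯ := by
      rw [← hsup1, sup_assoc, sup_eq_right.2 hδadj]
    rw [← hsup2] at hFD2 hrank2 hchar2
    refine ⟨hFD2, ?_, ?_⟩
    · rw [hrank2, show finrank F ↥E1 = 2 * finrank F ↥E from quad_finrank hδ2 hδ]
      ring
    · rintro x hxE ⟨y, hy, hyx⟩
      rcases hchar2 x (hEle hxE) ⟨y, hy, hyx⟩ with ⟨w, hw, hwx⟩ | ⟨w, hw, hwx⟩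
      · obtain ⟨u, hu, v, hv, h1, h2'⟩ := main w hw x 0 hxE (zero_mem E) (by rw [hwx]; ring)
        have huv : u * v = 0 := by
          rcases mul_eq_zero.1 (show (2 : Ω) * (u * v) = 0 by linear_combination h2') with h | h
          · exact absurd h h2
          · exact h
        rcases mul_eq_zero.1 huv with h | h
        · subst h
          right
          exact ⟨v * a, mul_mem hv haE, by linear_combination a * h1⟩
        · subst h
          left
          exact ⟨u, hu, by linear_combination h1⟩
      · obtain ⟨u, hu, v, hv, h1, h2'⟩ := main w hw 0 x (zero_mem E) hxE (by rw [hwx]; ring)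
        by_cases hv0 : v = 0
        · subst hv0
          left
          refine ⟨0, zero_mem E, ?_⟩
          have : x = 0 := by linear_combination -h2'
          rw [this]; ring
        · by_cases hu0 : u = 0
          · subst hu0
            left
            refine ⟨0, zero_mem E, ?_⟩
            have : x = 0 := by linear_combination -h2'
            rw [this]; ring
          · exact absurd (show (u * v⁻¹) ^ 2 = -a by field_simp; linear_combination h1)
              (hna' (u * v⁻¹) (mul_mem hu (inv_mem hv)))

end Quad

/-- In a UFD, an element that is a square in the fraction field is a square. -/
theorem sq_in_D {D F : Type*} [CommRing D] [IsDomain D] [UniqueFactorizationMonoid D]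
    [Field F] [Algebra D F] [IsFractionRing D F] (c : D) (u : F)
    (h : u ^ 2 = algebraMap D F c) : ∃ d : D, c = d ^ 2 := by
  have hint : IsIntegral D u := by
    refine ⟨Polynomial.X ^ 2 - Polynomial.C c, Polynomial.monic_X_pow_sub_C c two_ne_zero, ?_⟩
    simp [h]
  obtain ⟨d, hd⟩ := IsIntegrallyClosed.isIntegral_iff.mp hint
  refine ⟨d, IsFractionRing.injective D F ?_⟩
  rw [map_pow, hd, h]

theorem mem_Sset_of {D : Type*} [CommMonoid D] {ℓ : ℕ} (N : Fin ℓ → D)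
    (e : Fin ℓ → ℕ) (he : ∀ i, e i ≤ 1) (i0 : Fin ℓ) (hi0 : e i0 = 1) :
    (∏ i, N i ^ e i) ∈ Sset N 2 := by
  classical
  have hne : (Finset.univ.filter (fun i => e i = 1)).Nonempty := ⟨i0, by simp [hi0]⟩
  refine ⟨(Finset.univ.filter (fun i => e i = 1)).max' hne, e,
    fun j => lt_of_le_of_lt (he j) one_lt_two, ?_, ?_, rfl⟩
  · have := Finset.max'_mem _ hne
    simpa using this
  · intro j hj
    by_contra h0
    have hej : e j = 1 := le_antisymm (he j) (Nat.one_le_iff_ne_zero.2 h0)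
    have : j ∈ Finset.univ.filter (fun i => e i = 1) := by simp [hej]
    exact absurd (Finset.le_max' _ j this) (not_le.2 hj)

theorem lemma8c
    {D F : Type*} [CommRing D] [IsDomain D] [UniqueFactorizationMonoid D]
    [Field F] [Algebra D F] [IsFractionRing D F] (hchar : ringChar F ≠ 2)
    {ℓ : ℕ} (hℓ : 1 ≤ ℓ) (N : Fin ℓ → D) (hN : ∀ i, N i ≠ 0)
    (n : Fin ℓ → ℕ) (hn : ∀ i, 1 ≤ n i) (m : Fin ℓ → ℕ) (hm : ∀ i, m i = 2 ^ n i)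
    (ζ : AlgebraicClosure F) (hζ : IsPrimitiveRoot ζ (Finset.univ.lcm m))
    (hD : ¬ ∃ x ∈ Sset N 2, ∃ d : D, x = d ^ 2)
    (M : D) (hMS : M ∈ Sset N 2)
    (hMK : ∃ κ ∈ IntermediateField.adjoin F ({ζ} : Set (AlgebraicClosure F)),
      κ ^ 2 = algebraMap F (AlgebraicClosure F) (algebraMap D F M))
    (huniq : ∀ x ∈ Sset N 2,
      (∃ κ ∈ IntermediateField.adjoin F ({ζ} : Set (AlgebraicClosure F)),
        κ ^ 2 = algebraMap F (AlgebraicClosure F) (algebraMap D F x)) → x = M)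
    (f : Fin ℓ → ℕ) (hf : ∀ i, f i ≤ 1) (hMf : M = ∏ i, N i ^ f i)
    (hsharp : ∃ i, f i = 1)
    (h4 : 4 ∣ Finset.univ.lcm m)
    (hneg : ¬ ∃ x ∈ Sset N 2, ∃ d : D, x = -d ^ 2)
    (α : Fin ℓ → AlgebraicClosure F)
    (hα : ∀ i, α i ^ m i = algebraMap F (AlgebraicClosure F) (algebraMap D F (N i))) :
    (∀ i, f i = 1 →
      ¬ ∃ y ∈ IntermediateField.adjoin F (α '' {j | j ≠ i}),
        y ^ 2 = -algebraMap F (AlgebraicClosure F) (algebraMap D F (N i))) ∧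
    Module.finrank F (IntermediateField.adjoin F (Set.range α)) = ∏ i, m i := by
  classical
  let Ω := AlgebraicClosure F
  have hinj : Function.Injective (algebraMap F Ω) := (algebraMap F Ω).injective
  have h2Ω : (2 : Ω) ≠ 0 := by
    have h2F : (2 : F) ≠ 0 := Ring.two_ne_zero hchar
    have : algebraMap F Ω (2 : F) = (2 : Ω) := map_ofNat _ 2
    rw [← this]
    simpa using fun h => h2F (hinj (by simpa using h))
  -- the product with an extra factor of `N j`
  have hprod : ∀ (e : Fin ℓ → ℕ) (j : Fin ℓ), e j = 0 →
      N j * ∏ i, N i ^ e i = ∏ i, N i ^ (Function.update e j 1 i) := by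
    intro e j hej
    have h1 : ∏ i, N i ^ Function.update e j 1 i
        = N j ^ Function.update e j 1 j * ∏ i ∈ Finset.univ.erase j, N i ^ Function.update e j 1 i :=
      (Finset.mul_prod_erase Finset.univ _ (Finset.mem_univ j)).symm
    have h2 : ∏ i, N i ^ e i = N j ^ e j * ∏ i ∈ Finset.univ.erase j, N i ^ e i :=
      (Finset.mul_prod_erase Finset.univ _ (Finset.mem_univ j)).symm
    have h3 : ∏ i ∈ Finset.univ.erase j, N i ^ Function.update e j 1 i
        = ∏ i ∈ Finset.univ.erase j, N i ^ e i :=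
      Finset.prod_congr rfl (fun i hi => by rw [Function.update_of_ne (Finset.ne_of_mem_erase hi)])
    rw [h1, h3, h2, hej, Function.update_self, pow_zero, pow_one, one_mul]
  -- main induction over finite sets of indices
  have P : ∀ J : Finset (Fin ℓ),
      FiniteDimensional F ↥(IntermediateField.adjoin F (α '' ↑J)) ∧
      Module.finrank F ↥(IntermediateField.adjoin F (α '' ↑J)) = ∏ j ∈ J, m j ∧
      ∀ c : F, (∃ y ∈ IntermediateField.adjoin F (α '' ↑J), y ^ 2 = algebraMap F Ω c) →
        ∃ e : Fin ℓ → ℕ, (∀ i, e i ≤ 1) ∧ (∀ i, i ∉ J → e i = 0) ∧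
          ∃ u : F, u ^ 2 = c * algebraMap D F (∏ i, N i ^ e i) := by
    intro J
    induction J using Finset.induction_on with
    | empty =>
      rw [Finset.coe_empty, Set.image_empty, IntermediateField.adjoin_empty]
      refine ⟨inferInstance, by simp [IntermediateField.finrank_bot], ?_⟩
      rintro c ⟨y, hy, hyc⟩
      rw [IntermediateField.mem_bot] at hy
      obtain ⟨u, rfl⟩ := hy
      refine ⟨0, by simp, by simp, u, ?_⟩
      apply hinj
      rw [map_pow, hyc]
      simp
    | @insert j J hjJ IH =>
      obtain ⟨hFDJ, hrkJ, hcharJ⟩ := IH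
      set E := IntermediateField.adjoin F (α '' ↑J) with hEdef
      set aΩ : Ω := algebraMap F Ω (algebraMap D F (N j)) with haΩdef
      -- `N j` is not a square in `E`
      have hNj1 : ∀ u ∈ E, u ^ 2 ≠ aΩ := by
        intro u hu husq
        obtain ⟨e, he, hsupp, u', hu'⟩ := hcharJ (algebraMap D F (N j)) ⟨u, hu, husq⟩
        rw [← map_mul, hprod e j (hsupp j hjJ)] at hu'
        obtain ⟨d, hd⟩ := sq_in_D _ u' hu'
        exact hD ⟨_, mem_Sset_of N (Function.update e j 1) (fun i => by
          rcases eq_or_ne i j with rfl | hij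
          · simp [Function.update_self]
          · simpa [Function.update_of_ne hij] using he i) j (by simp [Function.update_self]),
          d, hd⟩
      -- `-N j` is not a square in `E`
      have hNj2 : ∀ u ∈ E, u ^ 2 ≠ -aΩ := by
        intro u hu husq
        obtain ⟨e, he, hsupp, u', hu'⟩ := hcharJ (-(algebraMap D F (N j)))
          ⟨u, hu, by rw [husq, haΩdef, map_neg]⟩
        rw [neg_mul, ← map_mul, hprod e j (hsupp j hjJ)] at hu'
        obtain ⟨d, hd⟩ := sq_in_D (-(∏ i, N i ^ (Function.update e j 1 i))) u'
          (by rw [map_neg, hu'])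
        refine hneg ⟨_, mem_Sset_of N (Function.update e j 1) (fun i => by
          rcases eq_or_ne i j with rfl | hij
          · simp [Function.update_self]
          · simpa [Function.update_of_ne hij] using he i) j (by simp [Function.update_self]),
          d, by linear_combination -hd⟩
      have haE : aΩ ∈ E := E.algebraMap_mem (algebraMap D F (N j))
      have hαpow : α j ^ 2 ^ n j = aΩ := by rw [← hm j]; exact hα j
      obtain ⟨hFD', hrk', hchar'⟩ := lemmaB h2Ω (n j) (hn j) E aΩ (α j) hFDJ haE hαpow hNj1 hNj2
      have himg : α '' ↑(insert j J) = α '' ↑J ∪ {α j} := by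
        rw [Finset.coe_insert, Set.image_insert_eq, Set.union_singleton]
      have hadj : IntermediateField.adjoin F (α '' ↑(insert j J)) = E ⊔ F⟮α j⟯ := by
        rw [himg, IntermediateField.adjoin_union, hEdef]
      rw [hadj]
      refine ⟨hFD', ?_, ?_⟩
      · rw [hrk', hrkJ, Finset.prod_insert hjJ, hm j]
      · rintro c ⟨y, hy, hyc⟩
        have hcE : algebraMap F Ω c ∈ E := E.algebraMap_mem c
        rcases hchar' (algebraMap F Ω c) hcE ⟨y, hy, hyc⟩ with ⟨u, hu, husq⟩ | ⟨u, hu, husq⟩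
        · obtain ⟨e, he, hsupp, u', hu'⟩ := hcharJ c ⟨u, hu, husq⟩
          exact ⟨e, he, fun i hi => hsupp i (fun hiJ => hi (Finset.mem_insert_of_mem hiJ)), u', hu'⟩
        · obtain ⟨e, he, hsupp, u', hu'⟩ := hcharJ (c * algebraMap D F (N j))
            ⟨u, hu, by rw [husq, map_mul]⟩
          refine ⟨Function.update e j 1, fun i => ?_, fun i hi => ?_, u', ?_⟩
          · rcases eq_or_ne i j with rfl | hij
            · simp [Function.update_self]
            · simpa [Function.update_of_ne hij] using he i
          · have hij : i ≠ j := fun h => hi (h ▸ Finset.mem_insert_self j J)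
            rw [Function.update_of_ne hij]
            exact hsupp i (fun hiJ => hi (Finset.mem_insert_of_mem hiJ))
          · rw [hu', ← hprod e j (hsupp j hjJ), map_mul]
            ring
  constructor
  · intro i _ hcontra
    obtain ⟨y, hy, hysq⟩ := hcontra
    have hset : α '' {j | j ≠ i} = α '' ↑(Finset.univ.erase i) := by
      congr 1
      ext j
      simp [Finset.mem_erase]
    obtain ⟨_, _, hcharJ⟩ := P (Finset.univ.erase i)
    obtain ⟨e, he, hsupp, u, hu⟩ := hcharJ (-(algebraMap D F (N i)))
      ⟨y, by rw [hset] at hy; exact hy, by rw [hysq, map_neg]⟩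
    have hei : e i = 0 := hsupp i (by simp)
    rw [neg_mul, ← map_mul, hprod e i hei] at hu
    obtain ⟨d, hd⟩ := sq_in_D (-(∏ k, N k ^ (Function.update e i 1 k))) u (by rw [map_neg, hu])
    refine hneg ⟨_, mem_Sset_of N (Function.update e i 1) (fun k => by
      rcases eq_or_ne k i with rfl | hki
      · simp [Function.update_self]
      · simpa [Function.update_of_ne hki] using he k) i (by simp [Function.update_self]),
      d, by linear_combination -hd⟩
  · obtain ⟨_, hrk, _⟩ := P Finset.univ
    have himg : Set.range α = α '' ↑(Finset.univ : Finset (Fin ℓ)) := by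
      rw [Finset.coe_univ, Set.image_univ]
    rw [himg]
    exact hrk
end
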